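/- Let G be a split graph on d−1 vertices with vertex partition into a clique C and a stable set S. Then the number of primitive faces of the Hansen polytope H(G), i.e., nonempty faces contained in no type-(1)-facet [ε, B] (ε ∈ {+1,−1}, B ⊆ C), equals the number of partitions (C⁺, C⁻, C⁰, S⁺, S⁻, S⁰) of (C,S) — including the trivial partition with C⁰ = C and S⁰ = S — satisfying condition (A): every element of C⁺ ∪ C⁻ has a neighbor in S⁺ ∪ S⁻. -/

import Mathlib

def IsStable {n : ℕ} (G : SimpleGraph (Fin n)) (I : Finset (Fin n)) : Prop :=
  ∀ ⦃a⦄, a ∈ I → ∀ ⦃b⦄, b ∈ I → ¬ G.Adj a b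

def hansenVert {n : ℕ} (I : Finset (Fin n)) : Fin (n + 1) → ℝ :=
  fun j => Fin.cases 1 (fun i => if i ∈ I then 1 else 0) j

def hansenPolytope {n : ℕ} (G : SimpleGraph (Fin n)) : Set (Fin (n + 1) → ℝ) :=
  convexHull ℝ
    {x | ∃ I : Finset (Fin n), IsStable G I ∧ (x = hansenVert I ∨ x = -hansenVert I)}

def hFace {n : ℕ} (G : SimpleGraph (Fin n)) (ε : ℝ) (K : Finset (Fin n)) :
    Set (Fin (n + 1) → ℝ) :=
  {x ∈ hansenPolytope G | ε * (-(x 0) + 2 * (∑ i ∈ K, x i.succ)) = 1}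

namespace HansenAux

open Finset
open scoped Classical

noncomputable section

variable {n : ℕ}

/-- The continuous linear functional with coefficient vector `c`. -/
def lin (c : Fin (n+1) → ℝ) : (Fin (n+1) → ℝ) →L[ℝ] ℝ :=
  ∑ j, c j • ContinuousLinearMap.proj j

lemma lin_apply (c x : Fin (n+1) → ℝ) : lin c x = ∑ j, c j * x j := by
  simp [lin, ContinuousLinearMap.sum_apply, ContinuousLinearMap.smul_apply,
    ContinuousLinearMap.proj_apply, smul_eq_mul]

lemma lin_neg_arg (c x : Fin (n+1) → ℝ) : lin c (-x) = -(lin c x) := map_neg _ x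

lemma lin_neg_coef (c x : Fin (n+1) → ℝ) : lin (-c) x = -(lin c x) := by
  rw [lin_apply, lin_apply, ← Finset.sum_neg_distrib]
  exact Finset.sum_congr rfl fun j _ => by simp [neg_mul]

lemma lin_sub (c h : Fin (n+1) → ℝ) (t : ℝ) (x : Fin (n+1) → ℝ) :
    lin (c - t • h) x = lin c x - t * lin h x := by
  rw [lin_apply, lin_apply, lin_apply, Finset.mul_sum, ← Finset.sum_sub_distrib]
  exact Finset.sum_congr rfl fun j _ => by simp [Pi.sub_apply, Pi.smul_apply, smul_eq_mul]; ring

/-- `f(I) = c₀ + ∑_{i∈I} c_{i+1}`, the value of the functional at the vertex `v_I`. -/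
def fval (c : Fin (n+1) → ℝ) (I : Finset (Fin n)) : ℝ := c 0 + ∑ i ∈ I, c i.succ

lemma fval_neg (c : Fin (n+1) → ℝ) (I : Finset (Fin n)) : fval (-c) I = -(fval c I) := by
  simp [fval, ← Finset.sum_neg_distrib]; ring

lemma lin_vert (c : Fin (n+1) → ℝ) (I : Finset (Fin n)) :
    lin c (hansenVert I) = fval c I := by
  rw [lin_apply, Fin.sum_univ_succ, fval]
  congr 1
  · simp [hansenVert]
  · have : ∀ i : Fin n, c i.succ * hansenVert I i.succ = if i ∈ I then c i.succ else 0 := by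
      intro i
      simp only [hansenVert, Fin.cases_succ, mul_ite, mul_one, mul_zero]
    rw [Finset.sum_congr rfl fun i _ => this i, Finset.sum_ite_mem, Finset.univ_inter]

lemma lin_neg_vert (c : Fin (n+1) → ℝ) (I : Finset (Fin n)) :
    lin c (-hansenVert I) = -(fval c I) := by rw [lin_neg_arg, lin_vert]

variable (G : SimpleGraph (Fin n))

/-- The finset of stable sets. -/
def stabs : Finset (Finset (Fin n)) := Finset.univ.filter (fun I => IsStable G I)

/-- The (finite) vertex set of the Hansen polytope. -/
def Vfin : Finset (Fin (n+1) → ℝ) :=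
  (stabs G).image (fun I => hansenVert I) ∪ (stabs G).image (fun I => -hansenVert I)

lemma mem_Vfin {x : Fin (n+1) → ℝ} :
    x ∈ Vfin G ↔ ∃ I, IsStable G I ∧ (x = hansenVert I ∨ x = -hansenVert I) := by
  simp only [Vfin, stabs, Finset.mem_union, Finset.mem_image, Finset.mem_filter,
    Finset.mem_univ, true_and]
  constructor
  · rintro (⟨I, hI, rfl⟩ | ⟨I, hI, rfl⟩)
    exacts [⟨I, hI, Or.inl rfl⟩, ⟨I, hI, Or.inr rfl⟩]
  · rintro ⟨I, hI, (rfl | rfl)⟩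
    exacts [Or.inl ⟨I, hI, rfl⟩, Or.inr ⟨I, hI, rfl⟩]

lemma hansen_eq : hansenPolytope G = convexHull ℝ ↑(Vfin G) := by
  unfold hansenPolytope
  congr 1
  ext x
  rw [Finset.mem_coe, mem_Vfin]
  rfl

lemma neg_mem_Vfin {x : Fin (n+1) → ℝ} (hx : x ∈ Vfin G) : -x ∈ Vfin G := by
  rw [mem_Vfin] at hx ⊢
  obtain ⟨I, hI, (rfl | rfl)⟩ := hx
  exacts [⟨I, hI, Or.inr rfl⟩, ⟨I, hI, Or.inl (by rw [neg_neg])⟩]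

lemma vert_mem_hansen {I : Finset (Fin n)} (h : IsStable G I) :
    hansenVert I ∈ hansenPolytope G :=
  subset_convexHull ℝ _ ⟨I, h, Or.inl rfl⟩

lemma neg_vert_mem_hansen {I : Finset (Fin n)} (h : IsStable G I) :
    -hansenVert I ∈ hansenPolytope G :=
  subset_convexHull ℝ _ ⟨I, h, Or.inr rfl⟩

lemma hull_le {c : Fin (n+1) → ℝ} {b : ℝ} (h : ∀ v ∈ Vfin G, lin c v ≤ b)
    {x : Fin (n+1) → ℝ} (hx : x ∈ hansenPolytope G) : lin c x ≤ b := by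
  rw [hansen_eq] at hx
  have : convexHull ℝ ↑(Vfin G) ⊆ {y | lin c y ≤ b} :=
    convexHull_min (fun v hv => h v hv)
      (convex_halfSpace_le ⟨fun a b => map_add _ a b, fun r a => map_smul _ r a⟩ b)
  exact this hx

end

end HansenAux

namespace HansenAux
open Finset
open scoped Classical
noncomputable section
variable {n : ℕ} (G : SimpleGraph (Fin n))

/-- Key transfer lemma: if `h ≤ Mh` on all vertices with equality on every vertex maximizing
`lin c`, then `lin h = Mh` on the whole exposed face `{x ∈ P : lin c x = M}`. -/
lemma transfer (c h : Fin (n+1) → ℝ) (M Mh : ℝ) (hMh : 0 ≤ Mh)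
    (hcv : ∀ v ∈ Vfin G, lin c v ≤ M)
    (hhv : ∀ v ∈ Vfin G, lin h v ≤ Mh)
    (hhv' : ∀ v ∈ Vfin G, -Mh ≤ lin h v)
    (heq : ∀ v ∈ Vfin G, lin c v = M → lin h v = Mh) :
    ∀ x ∈ hansenPolytope G, lin c x = M → lin h x = Mh := by
  intro x hx hxM
  have hle : lin h x ≤ Mh := hull_le G hhv hx
  rcases eq_or_lt_of_le hMh with h0 | hpos
  · refine le_antisymm hle ?_
    have : ∀ v ∈ Vfin G, lin (-h) v ≤ Mh := fun v hv => by
      rw [lin_neg_coef]; linarith [hhv' v hv]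
    have := hull_le G this hx
    rw [lin_neg_coef] at this
    linarith
  -- positive case
  by_cases hVb : ((Vfin G).filter (fun v => lin c v ≠ M)).Nonempty
  · set Vb := (Vfin G).filter (fun v => lin c v ≠ M) with hVbdef
    set mx := Vb.sup' hVb (fun v => lin c v) with hmx
    have hmxlt : mx < M := by
      rw [hmx, Finset.sup'_lt_iff]
      intro v hv
      rw [hVbdef, Finset.mem_filter] at hv
      exact lt_of_le_of_ne (hcv v hv.1) hv.2
    set t : ℝ := (M - mx) / (2 * Mh) with ht
    have htpos : 0 < t := by
      apply div_pos (by linarith) (by linarith)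
    have hbound : ∀ v ∈ Vfin G, lin (c - t • h) v ≤ M - t * Mh := by
      intro v hv
      rw [lin_sub]
      by_cases hvM : lin c v = M
      · rw [hvM, heq v hv hvM]
      · have hvb : v ∈ Vb := by rw [hVbdef, Finset.mem_filter]; exact ⟨hv, hvM⟩
        have h1 : lin c v ≤ mx := Finset.le_sup' (fun v => lin c v) hvb
        have h2 : -Mh ≤ lin h v := hhv' v hv
        have h3 : t * (2 * Mh) = M - mx := by
          rw [ht]; field_simp
        nlinarith
    have := hull_le G hbound hx
    rw [lin_sub, hxM] at this
    have : Mh ≤ lin h x := by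
      have h4 : t * Mh ≤ t * lin h x := by linarith
      exact le_of_mul_le_mul_left h4 htpos
    linarith
  · -- every vertex maximizes
    refine le_antisymm hle ?_
    have : ∀ v ∈ Vfin G, lin (-h) v ≤ -Mh := fun v hv => by
      have : lin c v = M := by
        by_contra hne
        exact hVb ⟨v, Finset.mem_filter.mpr ⟨hv, hne⟩⟩
      rw [lin_neg_coef, heq v hv this]
    have := hull_le G this hx
    rw [lin_neg_coef] at this
    linarith

/-- Coefficient vector of the functional `ε·(−x₀ + 2∑_{i∈B} x_{i+1})`. -/
def hB (ε : ℝ) (B : Finset (Fin n)) : Fin (n+1) → ℝ :=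
  fun j => Fin.cases (-ε) (fun i => if i ∈ B then 2*ε else 0) j

lemma lin_hB (ε : ℝ) (B : Finset (Fin n)) (x : Fin (n+1) → ℝ) :
    lin (hB ε B) x = ε * (-(x 0) + 2 * (∑ i ∈ B, x i.succ)) := by
  rw [lin_apply, Fin.sum_univ_succ]
  have h0 : hB ε B 0 = -ε := rfl
  have hs : ∀ i : Fin n, hB ε B i.succ * x i.succ = if i ∈ B then 2*ε * x i.succ else 0 := by
    intro i
    simp only [hB, Fin.cases_succ, ite_mul, zero_mul]
  rw [h0, Finset.sum_congr rfl fun i _ => hs i, Finset.sum_ite_mem, Finset.univ_inter]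
  have : ∑ i ∈ B, 2 * ε * x i.succ = ε * (2 * ∑ i ∈ B, x i.succ) := by
    rw [Finset.mul_sum, Finset.mul_sum]
    exact Finset.sum_congr rfl fun i _ => by ring
  rw [this]
  ring

lemma fval_hB (ε : ℝ) (B I : Finset (Fin n)) :
    fval (hB ε B) I = ε * (2 * ((I ∩ B).card : ℝ) - 1) := by
  unfold fval
  have h0 : hB ε B 0 = -ε := rfl
  have : ∀ i ∈ I, hB ε B i.succ = if i ∈ B then 2*ε else 0 := fun i _ => rfl
  rw [h0, Finset.sum_congr rfl this, Finset.sum_ite_mem, Finset.sum_const, nsmul_eq_mul]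
  ring

end
end HansenAux

namespace HansenAux
open Finset
open scoped Classical
noncomputable section
variable {n : ℕ}

/-- `S⁺(c)`: elements of `S` with positive coefficient. -/
def Spos (S : Finset (Fin n)) (c : Fin (n+1) → ℝ) : Finset (Fin n) :=
  S.filter (fun s => 0 < c s.succ)

/-- `S⁻(c)`: elements of `S` with negative coefficient. -/
def Sneg (S : Finset (Fin n)) (c : Fin (n+1) → ℝ) : Finset (Fin n) :=
  S.filter (fun s => c s.succ < 0)

/-- `T⁺(c) = ∑_{s ∈ S⁺} c_s`. -/
def Tp (S : Finset (Fin n)) (c : Fin (n+1) → ℝ) : ℝ := ∑ s ∈ Spos S c, c s.succ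

/-- `p(cc) = ∑_{s ∈ S⁺ ∩ N(cc)} c_s`. -/
def pf (G : SimpleGraph (Fin n)) (S : Finset (Fin n)) (c : Fin (n+1) → ℝ) (cc : Fin n) : ℝ :=
  ∑ s ∈ (Spos S c).filter (fun s => G.Adj cc s), c s.succ

/-- `m(cc) = ∑_{s ∈ S⁻ ∩ N(cc)} c_s`. -/
def mf (G : SimpleGraph (Fin n)) (S : Finset (Fin n)) (c : Fin (n+1) → ℝ) (cc : Fin n) : ℝ :=
  ∑ s ∈ (Sneg S c).filter (fun s => G.Adj cc s), c s.succ

lemma Spos_neg (S : Finset (Fin n)) (c : Fin (n+1) → ℝ) : Spos S (-c) = Sneg S c := by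
  unfold Spos Sneg
  exact Finset.filter_congr fun s _ => by simp [Pi.neg_apply]

lemma Sneg_neg (S : Finset (Fin n)) (c : Fin (n+1) → ℝ) : Sneg S (-c) = Spos S c := by
  unfold Spos Sneg
  exact Finset.filter_congr fun s _ => by simp [Pi.neg_apply]

lemma pf_neg (G : SimpleGraph (Fin n)) (S : Finset (Fin n)) (c : Fin (n+1) → ℝ) (cc : Fin n) :
    pf G S (-c) cc = -(mf G S c cc) := by
  unfold pf mf
  rw [Spos_neg, ← Finset.sum_neg_distrib]
  exact Finset.sum_congr rfl fun s _ => by simp [Pi.neg_apply]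

lemma mf_neg (G : SimpleGraph (Fin n)) (S : Finset (Fin n)) (c : Fin (n+1) → ℝ) (cc : Fin n) :
    mf G S (-c) cc = -(pf G S c cc) := by
  unfold pf mf
  rw [Sneg_neg, ← Finset.sum_neg_distrib]
  exact Finset.sum_congr rfl fun s _ => by simp [Pi.neg_apply]

lemma Tp_neg (S : Finset (Fin n)) (c : Fin (n+1) → ℝ) :
    Tp S (-c) = -∑ s ∈ Sneg S c, c s.succ := by
  unfold Tp
  rw [Spos_neg, ← Finset.sum_neg_distrib]
  exact Finset.sum_congr rfl fun s _ => by simp [Pi.neg_apply]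

lemma pf_nonneg (G : SimpleGraph (Fin n)) (S : Finset (Fin n)) (c : Fin (n+1) → ℝ) (cc : Fin n) :
    0 ≤ pf G S c cc :=
  Finset.sum_nonneg fun s hs => le_of_lt (Finset.mem_filter.mp (Finset.mem_filter.mp hs).1).2

lemma mf_nonpos (G : SimpleGraph (Fin n)) (S : Finset (Fin n)) (c : Fin (n+1) → ℝ) (cc : Fin n) :
    mf G S c cc ≤ 0 :=
  Finset.sum_nonpos fun s hs => le_of_lt (Finset.mem_filter.mp (Finset.mem_filter.mp hs).1).2

/-- Core estimate for sums of coefficients over subsets of `S`. -/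
lemma core_pos {S : Finset (Fin n)} {c : Fin (n+1) → ℝ} {X Y : Finset (Fin n)}
    (hY : Y ⊆ Spos S c) (hXY : ∀ s ∈ X, 0 < c s.succ → s ∈ Y) :
    (∑ s ∈ X, c s.succ ≤ ∑ s ∈ Y, c s.succ) ∧
    (∑ s ∈ X, c s.succ = ∑ s ∈ Y, c s.succ ↔
      ((∀ s ∈ X, ¬ c s.succ < 0) ∧ Y ⊆ X)) := by
  classical
  set Xp := X.filter (fun s => 0 < c s.succ) with hXp
  set Xr := X.filter (fun s => ¬ 0 < c s.succ) with hXr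
  have hsplit : ∑ s ∈ Xp, c s.succ + ∑ s ∈ Xr, c s.succ = ∑ s ∈ X, c s.succ :=
    Finset.sum_filter_add_sum_filter_not X _ _
  have hXrle : ∑ s ∈ Xr, c s.succ ≤ 0 :=
    Finset.sum_nonpos fun s hs => le_of_not_gt (Finset.mem_filter.mp hs).2
  have hXpY : Xp ⊆ Y := fun s hs => by
    rw [hXp, Finset.mem_filter] at hs; exact hXY s hs.1 hs.2
  have hYnonneg : ∀ s ∈ Y, 0 < c s.succ := fun s hs =>
    (Finset.mem_filter.mp (hY hs)).2
  have hXple : ∑ s ∈ Xp, c s.succ ≤ ∑ s ∈ Y, c s.succ :=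
    Finset.sum_le_sum_of_subset_of_nonneg hXpY fun s hs _ => le_of_lt (hYnonneg s hs)
  constructor
  · linarith
  constructor
  · intro heq
    have h1 : ∑ s ∈ Xp, c s.succ = ∑ s ∈ Y, c s.succ := by linarith
    have h2 : ∑ s ∈ Xr, c s.succ = 0 := by linarith
    constructor
    · intro s hsX hneg
      have hsr : s ∈ Xr := by
        rw [hXr, Finset.mem_filter]; exact ⟨hsX, fun h => absurd hneg (asymm h)⟩
      have herase : ∑ t ∈ Xr.erase s, c t.succ + c s.succ = ∑ t ∈ Xr, c t.succ :=
        Finset.sum_erase_add Xr _ hsr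
      have : ∑ t ∈ Xr.erase s, c t.succ ≤ 0 :=
        Finset.sum_nonpos fun t ht =>
          le_of_not_gt (Finset.mem_filter.mp (Finset.mem_of_mem_erase ht)).2
      linarith
    · intro y hy
      by_contra hyX
      have hyXp : y ∉ Xp := fun h => hyX (Finset.mem_of_mem_filter y h)
      have : ∑ s ∈ Xp, c s.succ < ∑ s ∈ Y, c s.succ :=
        Finset.sum_lt_sum_of_subset hXpY hy hyXp (hYnonneg y hy)
          (fun j hj _ => le_of_lt (hYnonneg j hj))
      linarith
  · rintro ⟨hnoneg, hYX⟩
    have h2 : ∑ s ∈ Xr, c s.succ = 0 :=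
      Finset.sum_eq_zero fun s hs => by
        have hs' := Finset.mem_filter.mp hs
        have := hnoneg s hs'.1
        have := hs'.2
        linarith [le_of_not_gt hs'.2, le_of_not_gt (hnoneg s hs'.1)]
    have hYXp : Y ⊆ Xp := fun y hy => by
      rw [hXp, Finset.mem_filter]; exact ⟨hYX hy, hYnonneg y hy⟩
    have h1 : Xp = Y := Finset.Subset.antisymm hXpY hYXp
    rw [← hsplit, h1, h2, add_zero]

variable (G : SimpleGraph (Fin n)) (C S : Finset (Fin n))

lemma sum_split (hdisj : Disjoint C S) (hcover : C ∪ S = Finset.univ) (I : Finset (Fin n)) (f : Fin n → ℝ) :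
    ∑ i ∈ I, f i = ∑ i ∈ I ∩ C, f i + ∑ i ∈ I ∩ S, f i := by
  have hIS : I \ C = I ∩ S := by
    ext x
    simp only [Finset.mem_sdiff, Finset.mem_inter]
    constructor
    · rintro ⟨hx, hxC⟩
      refine ⟨hx, ?_⟩
      have : x ∈ C ∪ S := hcover ▸ Finset.mem_univ x
      rw [Finset.mem_union] at this
      tauto
    · rintro ⟨hx, hxS⟩
      exact ⟨hx, fun hxC => Finset.disjoint_left.mp hdisj hxC hxS⟩
  rw [← Finset.sum_inter_add_sum_sdiff I C f, hIS]

lemma stable_interC (hC : G.IsClique (↑C : Set (Fin n))) {I : Finset (Fin n)}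
    (hI : IsStable G I) : I ∩ C = ∅ ∨ ∃ cc, I ∩ C = {cc} := by
  rcases Finset.eq_empty_or_nonempty (I ∩ C) with h | ⟨a, ha⟩
  · exact Or.inl h
  · refine Or.inr ⟨a, ?_⟩
    rw [Finset.eq_singleton_iff_unique_mem]
    refine ⟨ha, fun b hb => ?_⟩
    by_contra hne
    have hadj : G.Adj b a :=
      hC (Finset.mem_coe.mpr (Finset.mem_inter.mp hb).2)
        (Finset.mem_coe.mpr (Finset.mem_inter.mp ha).2) hne
    exact hI (Finset.mem_inter.mp hb).1 (Finset.mem_inter.mp ha).1 hadj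

end
end HansenAux

namespace HansenAux
open Finset
open scoped Classical
noncomputable section
variable {n : ℕ} (G : SimpleGraph (Fin n)) (C S : Finset (Fin n))

/-- The combinatorial predicate characterizing vertices `v_I` lying on the face. -/
def Pred (c : Fin (n+1) → ℝ) (I : Finset (Fin n)) : Prop :=
  (∀ s ∈ I, s ∉ Sneg S c) ∧
  (∀ cc ∈ I, cc ∈ C → c cc.succ = pf G S c cc) ∧
  (∀ s ∈ Spos S c, (∀ cc ∈ I, cc ∈ C → ¬ G.Adj cc s) → s ∈ I)

variable {G C S}

section Core
variable {c : Fin (n+1) → ℝ} {I : Finset (Fin n)}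

lemma fval_le_empty (hIC : I ∩ C = ∅) (hIsub : I ⊆ S) :
    fval c I ≤ c 0 + Tp S c ∧
    (fval c I = c 0 + Tp S c ↔ ((∀ s ∈ I, ¬ c s.succ < 0) ∧ Spos S c ⊆ I)) := by
  have core := core_pos (S := S) (c := c) (X := I) (Y := Spos S c)
    (Finset.Subset.refl _)
    (fun s hs hpos => Finset.mem_filter.mpr ⟨hIsub hs, hpos⟩)
  unfold fval Tp
  constructor
  · linarith [core.1]
  · rw [← core.2]
    constructor <;> intro h <;> linarith [h]

lemma fval_le_single (hdisj : Disjoint C S) (hcover : C ∪ S = Finset.univ) (hI : IsStable G I) {cc : Fin n} (hIC : I ∩ C = {cc}) :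
    fval c I ≤ c 0 + c cc.succ + (Tp S c - pf G S c cc) ∧
    (fval c I = c 0 + c cc.succ + (Tp S c - pf G S c cc) ↔
      ((∀ s ∈ I ∩ S, ¬ c s.succ < 0) ∧
       (Spos S c).filter (fun s => ¬ G.Adj cc s) ⊆ I)) := by
  have hccI : cc ∈ I ∧ cc ∈ C := by
    have h := Finset.mem_singleton_self cc
    rw [← hIC, Finset.mem_inter] at h
    exact h
  set Y := (Spos S c).filter (fun s => ¬ G.Adj cc s) with hYdef
  have hYs : pf G S c cc + ∑ s ∈ Y, c s.succ = Tp S c :=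
    Finset.sum_filter_add_sum_filter_not (Spos S c) (fun s => G.Adj cc s) _
  have core := core_pos (S := S) (c := c) (X := I ∩ S) (Y := Y)
    (Finset.filter_subset _ _)
    (fun s hs hpos => by
      rw [hYdef, Finset.mem_filter]
      have hsI := (Finset.mem_inter.mp hs).1
      have hsS := (Finset.mem_inter.mp hs).2
      exact ⟨Finset.mem_filter.mpr ⟨hsS, hpos⟩, hI hccI.1 hsI⟩)
  have hsplit : ∑ i ∈ I, c i.succ = c cc.succ + ∑ i ∈ I ∩ S, c i.succ := by
    rw [sum_split C S hdisj hcover I (fun i => c i.succ), hIC, Finset.sum_singleton]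
  have hYsub : (Y ⊆ I ∩ S) ↔ (Y ⊆ I) := by
    constructor
    · exact fun h => h.trans (Finset.inter_subset_left)
    · intro h y hy
      exact Finset.mem_inter.mpr ⟨h hy,
        (Finset.mem_filter.mp (Finset.mem_filter.mp (hYdef ▸ hy)).1).1⟩
  unfold fval
  constructor
  · rw [hsplit]; linarith [core.1]
  · rw [← hYsub, ← core.2, hsplit]
    constructor <;> intro h <;> linarith [h]

lemma I_subset_S_of_interC_empty (hcover : C ∪ S = Finset.univ) (hIC : I ∩ C = ∅) : I ⊆ S := by
  intro x hx
  have hx' : x ∈ C ∪ S := hcover ▸ Finset.mem_univ x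
  rw [Finset.mem_union] at hx'
  rcases hx' with h | h
  · exact absurd (Finset.mem_inter.mpr ⟨hx, h⟩) (by rw [hIC]; exact Finset.notMem_empty x)
  · exact h

lemma fval_le (hdisj : Disjoint C S) (hcover : C ∪ S = Finset.univ) (hC : G.IsClique (↑C : Set (Fin n))) (H1 : ∀ cc ∈ C, c cc.succ ≤ pf G S c cc) (hI : IsStable G I) :
    fval c I ≤ c 0 + Tp S c := by
  rcases stable_interC G C hC hI with hIC | ⟨cc, hIC⟩
  · exact (fval_le_empty hIC (I_subset_S_of_interC_empty hcover hIC)).1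
  · have hccC : cc ∈ C := by
      have h := Finset.mem_singleton_self cc
      rw [← hIC, Finset.mem_inter] at h
      exact h.2
    have h1 := (fval_le_single (c := c) hdisj hcover hI hIC).1
    have h2 := H1 cc hccC
    linarith

lemma fval_eq_iff (hdisj : Disjoint C S) (hcover : C ∪ S = Finset.univ) (hC : G.IsClique (↑C : Set (Fin n))) (H1 : ∀ cc ∈ C, c cc.succ ≤ pf G S c cc) (hI : IsStable G I) :
    fval c I = c 0 + Tp S c ↔ Pred G C S c I := by
  rcases stable_interC G C hC hI with hIC | ⟨cc, hIC⟩
  · have hIsub := I_subset_S_of_interC_empty hcover hIC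
    rw [(fval_le_empty hIC hIsub).2]
    unfold Pred
    constructor
    · rintro ⟨h1, h2⟩
      refine ⟨fun s hs hmem => h1 s hs (Finset.mem_filter.mp hmem).2, ?_, ?_⟩
      · intro x hxI hxC
        exact absurd (Finset.mem_inter.mpr ⟨hxI, hxC⟩)
          (by rw [hIC]; exact Finset.notMem_empty x)
      · exact fun s hs _ => h2 hs
    · rintro ⟨h1, _, h3⟩
      refine ⟨fun s hs hneg => h1 s hs (Finset.mem_filter.mpr ⟨hIsub hs, hneg⟩), ?_⟩
      intro s hs
      refine h3 s hs (fun x hxI hxC => ?_)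
      exact absurd (Finset.mem_inter.mpr ⟨hxI, hxC⟩)
        (by rw [hIC]; exact Finset.notMem_empty x)
  · have hccI : cc ∈ I ∧ cc ∈ C := by
      have h := Finset.mem_singleton_self cc
      rw [← hIC, Finset.mem_inter] at h
      exact h
    have hfls := fval_le_single hdisj hcover (c := c) hI hIC
    have hpfcc := H1 cc hccI.2
    have hIC' : ∀ x ∈ I, x ∈ C → x = cc := by
      intro x hxI hxC
      have : x ∈ I ∩ C := Finset.mem_inter.mpr ⟨hxI, hxC⟩
      rw [hIC, Finset.mem_singleton] at this
      exact this
    constructor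
    · intro heq
      have heq2 : c cc.succ = pf G S c cc := by
        have := hfls.1
        linarith
      have heq3 : fval c I = c 0 + c cc.succ + (Tp S c - pf G S c cc) := by
        rw [heq, heq2]; ring
      obtain ⟨h1, h2⟩ := hfls.2.mp heq3
      refine ⟨?_, ?_, ?_⟩
      · intro s hs hmem
        have hsS := (Finset.mem_filter.mp hmem).1
        have hneg := (Finset.mem_filter.mp hmem).2
        exact h1 s (Finset.mem_inter.mpr ⟨hs, hsS⟩) hneg
      · intro x hxI hxC
        rw [hIC' x hxI hxC]; exact heq2
      · intro s hs hnadj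
        exact h2 (Finset.mem_filter.mpr ⟨hs, hnadj cc hccI.1 hccI.2⟩)
    · rintro ⟨h1, h2, h3⟩
      have heq2 : c cc.succ = pf G S c cc := h2 cc hccI.1 hccI.2
      have heq3 : fval c I = c 0 + c cc.succ + (Tp S c - pf G S c cc) := by
        rw [hfls.2]
        refine ⟨fun s hs hneg => ?_, fun s hs => ?_⟩
        · have := (Finset.mem_inter.mp hs)
          exact h1 s this.1 (Finset.mem_filter.mpr ⟨this.2, hneg⟩)
        · have hsS := Finset.mem_filter.mp hs
          refine h3 s hsS.1 (fun x hxI hxC => ?_)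
          rw [hIC' x hxI hxC]
          exact hsS.2
      rw [heq3, heq2]; ring

end Core
end
end HansenAux

namespace HansenAux
open Finset
open scoped Classical
noncomputable section
variable {n : ℕ}

/-- Hypotheses on a quadruple (the right-hand side set of the theorem). -/
def QH (G : SimpleGraph (Fin n)) (C S Cp Cm SP SM : Finset (Fin n)) : Prop :=
  Cp ⊆ C ∧ Cm ⊆ C ∧ Disjoint Cp Cm ∧ SP ⊆ S ∧ SM ⊆ S ∧ Disjoint SP SM ∧
  (∀ cc ∈ Cp ∪ Cm, ∃ s ∈ SP ∪ SM, G.Adj cc s)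

/-- The coefficient vector of the exposing functional attached to a partition. -/
def cvec (G : SimpleGraph (Fin n)) (C Cp Cm SP SM : Finset (Fin n)) : Fin (n+1) → ℝ :=
  fun j => Fin.cases ((SM.card : ℝ) - SP.card)
    (fun i =>
      if i ∈ SP then 2
      else if i ∈ SM then -2
      else if i ∈ Cp then 2 * ((SP.filter (fun s => G.Adj i s)).card : ℝ)
      else if i ∈ Cm then -(2 * ((SM.filter (fun s => G.Adj i s)).card : ℝ))
      else if i ∈ C then ((SP.filter (fun s => G.Adj i s)).card : ℝ)
        - ((SM.filter (fun s => G.Adj i s)).card : ℝ)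
      else 0) j

variable {G : SimpleGraph (Fin n)} {C S Cp Cm SP SM : Finset (Fin n)}

lemma cvec_zero : cvec G C Cp Cm SP SM 0 = (SM.card : ℝ) - SP.card := rfl

lemma cvec_succ (i : Fin n) :
    cvec G C Cp Cm SP SM i.succ =
      (if i ∈ SP then (2:ℝ)
      else if i ∈ SM then -2
      else if i ∈ Cp then 2 * ((SP.filter (fun s => G.Adj i s)).card : ℝ)
      else if i ∈ Cm then -(2 * ((SM.filter (fun s => G.Adj i s)).card : ℝ))
      else if i ∈ C then ((SP.filter (fun s => G.Adj i s)).card : ℝ)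
        - ((SM.filter (fun s => G.Adj i s)).card : ℝ)
      else 0) := by
  simp [cvec]

section CoeffLemmas

lemma cvec_succ_SP (hi : i ∈ SP) : cvec G C Cp Cm SP SM i.succ = 2 := by
  rw [cvec_succ, if_pos hi]

lemma cvec_succ_SM (hq : QH G C S Cp Cm SP SM) (hi : i ∈ SM) : cvec G C Cp Cm SP SM i.succ = -2 := by
  obtain ⟨_, _, _, _, _, hdSS, _⟩ := hq
  rw [cvec_succ, if_neg (fun h => Finset.disjoint_left.mp hdSS h hi), if_pos hi]

lemma not_mem_SP_of_C (hq : QH G C S Cp Cm SP SM) (hdisj : Disjoint C S) {cc : Fin n}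
    (hcc : cc ∈ C) : cc ∉ SP :=
  fun h => Finset.disjoint_left.mp hdisj hcc (hq.2.2.2.1 h)

lemma not_mem_SM_of_C (hq : QH G C S Cp Cm SP SM) (hdisj : Disjoint C S) {cc : Fin n}
    (hcc : cc ∈ C) : cc ∉ SM :=
  fun h => Finset.disjoint_left.mp hdisj hcc (hq.2.2.2.2.1 h)

lemma cvec_succ_Cp (hdisj : Disjoint C S) (hq : QH G C S Cp Cm SP SM) {cc : Fin n} (hcc : cc ∈ Cp) :
    cvec G C Cp Cm SP SM cc.succ = 2 * ((SP.filter (fun s => G.Adj cc s)).card : ℝ) := by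
  have hC := hq.1 hcc
  rw [cvec_succ, if_neg (not_mem_SP_of_C hq hdisj hC), if_neg (not_mem_SM_of_C hq hdisj hC),
    if_pos hcc]

lemma cvec_succ_Cm (hdisj : Disjoint C S) (hq : QH G C S Cp Cm SP SM) {cc : Fin n} (hcc : cc ∈ Cm) :
    cvec G C Cp Cm SP SM cc.succ = -(2 * ((SM.filter (fun s => G.Adj cc s)).card : ℝ)) := by
  have hC := hq.2.1 hcc
  rw [cvec_succ, if_neg (not_mem_SP_of_C hq hdisj hC), if_neg (not_mem_SM_of_C hq hdisj hC),
    if_neg (fun h => Finset.disjoint_left.mp hq.2.2.1 h hcc), if_pos hcc]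

lemma cvec_succ_C0 (hdisj : Disjoint C S) (hq : QH G C S Cp Cm SP SM) {cc : Fin n} (hcc : cc ∈ C) (h1 : cc ∉ Cp) (h2 : cc ∉ Cm) :
    cvec G C Cp Cm SP SM cc.succ = ((SP.filter (fun s => G.Adj cc s)).card : ℝ)
      - ((SM.filter (fun s => G.Adj cc s)).card : ℝ) := by
  rw [cvec_succ, if_neg (not_mem_SP_of_C hq hdisj hcc), if_neg (not_mem_SM_of_C hq hdisj hcc),
    if_neg h1, if_neg h2, if_pos hcc]

lemma cvec_succ_S0 (hdisj : Disjoint C S) (hq : QH G C S Cp Cm SP SM) {s : Fin n} (hs : s ∈ S) (h1 : s ∉ SP) (h2 : s ∉ SM) :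
    cvec G C Cp Cm SP SM s.succ = 0 := by
  have hsC : s ∉ C := fun h => Finset.disjoint_left.mp hdisj h hs
  rw [cvec_succ, if_neg h1, if_neg h2, if_neg (fun h => hsC (hq.1 h)),
    if_neg (fun h => hsC (hq.2.1 h)), if_neg hsC]

lemma qSpos (hdisj : Disjoint C S) (hq : QH G C S Cp Cm SP SM) : Spos S (cvec G C Cp Cm SP SM) = SP := by
  ext s
  rw [Spos, Finset.mem_filter]
  constructor
  · rintro ⟨hsS, hspos⟩
    by_contra hsp
    by_cases hsm : s ∈ SM
    · rw [cvec_succ_SM hq hsm] at hspos; linarith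
    · rw [cvec_succ_S0 hdisj hq hsS hsp hsm] at hspos; linarith
  · intro hsp
    exact ⟨hq.2.2.2.1 hsp, by rw [cvec_succ_SP hsp]; norm_num⟩

lemma qSneg (hdisj : Disjoint C S) (hq : QH G C S Cp Cm SP SM) : Sneg S (cvec G C Cp Cm SP SM) = SM := by
  ext s
  rw [Sneg, Finset.mem_filter]
  constructor
  · rintro ⟨hsS, hsneg⟩
    by_contra hsm
    by_cases hsp : s ∈ SP
    · rw [cvec_succ_SP hsp] at hsneg; linarith
    · rw [cvec_succ_S0 hdisj hq hsS hsp hsm] at hsneg; linarith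
  · intro hsm
    exact ⟨hq.2.2.2.2.1 hsm, by rw [cvec_succ_SM hq hsm]; norm_num⟩

lemma qTp (hdisj : Disjoint C S) (hq : QH G C S Cp Cm SP SM) : Tp S (cvec G C Cp Cm SP SM) = 2 * (SP.card : ℝ) := by
  rw [Tp, qSpos hdisj hq]
  rw [Finset.sum_congr rfl (fun s hs => cvec_succ_SP hs), Finset.sum_const, nsmul_eq_mul]
  ring

lemma qpf (hdisj : Disjoint C S) (hq : QH G C S Cp Cm SP SM) (cc : Fin n) : pf G S (cvec G C Cp Cm SP SM) cc
    = 2 * ((SP.filter (fun s => G.Adj cc s)).card : ℝ) := by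
  rw [pf, qSpos hdisj hq]
  rw [Finset.sum_congr rfl (fun s hs => cvec_succ_SP (Finset.mem_of_mem_filter s hs)),
    Finset.sum_const, nsmul_eq_mul]
  ring

lemma qmf (hdisj : Disjoint C S) (hq : QH G C S Cp Cm SP SM) (cc : Fin n) : mf G S (cvec G C Cp Cm SP SM) cc
    = -(2 * ((SM.filter (fun s => G.Adj cc s)).card : ℝ)) := by
  rw [mf, qSneg hdisj hq]
  rw [Finset.sum_congr rfl (fun s hs => cvec_succ_SM hq (Finset.mem_of_mem_filter s hs)),
    Finset.sum_const, nsmul_eq_mul]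
  ring

lemma qH1 (hdisj : Disjoint C S) (hq : QH G C S Cp Cm SP SM) : ∀ cc ∈ C, cvec G C Cp Cm SP SM cc.succ ≤ pf G S (cvec G C Cp Cm SP SM) cc := by
  intro cc hcc
  rw [qpf hdisj hq]
  by_cases h1 : cc ∈ Cp
  · rw [cvec_succ_Cp hdisj hq h1]
  · by_cases h2 : cc ∈ Cm
    · rw [cvec_succ_Cm hdisj hq h2]
      have := Nat.cast_nonneg (α := ℝ) ((SP.filter (fun s => G.Adj cc s)).card)
      have := Nat.cast_nonneg (α := ℝ) ((SM.filter (fun s => G.Adj cc s)).card)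
      linarith
    · rw [cvec_succ_C0 hdisj hq hcc h1 h2]
      have := Nat.cast_nonneg (α := ℝ) ((SP.filter (fun s => G.Adj cc s)).card)
      have := Nat.cast_nonneg (α := ℝ) ((SM.filter (fun s => G.Adj cc s)).card)
      linarith

lemma qH2 (hdisj : Disjoint C S) (hq : QH G C S Cp Cm SP SM) : ∀ cc ∈ C, mf G S (cvec G C Cp Cm SP SM) cc ≤ cvec G C Cp Cm SP SM cc.succ := by
  intro cc hcc
  rw [qmf hdisj hq]
  by_cases h1 : cc ∈ Cp
  · rw [cvec_succ_Cp hdisj hq h1]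
    have := Nat.cast_nonneg (α := ℝ) ((SP.filter (fun s => G.Adj cc s)).card)
    have := Nat.cast_nonneg (α := ℝ) ((SM.filter (fun s => G.Adj cc s)).card)
    linarith
  · by_cases h2 : cc ∈ Cm
    · rw [cvec_succ_Cm hdisj hq h2]
    · rw [cvec_succ_C0 hdisj hq hcc h1 h2]
      have := Nat.cast_nonneg (α := ℝ) ((SP.filter (fun s => G.Adj cc s)).card)
      have := Nat.cast_nonneg (α := ℝ) ((SM.filter (fun s => G.Adj cc s)).card)
      linarith

end CoeffLemmas
end
end HansenAux

namespace HansenAux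
open Finset
open scoped Classical
noncomputable section
variable {n : ℕ} {G : SimpleGraph (Fin n)} {C S Cp Cm SP SM : Finset (Fin n)}

/-- The face of the Hansen polytope attached to a partition. -/
def qface (G : SimpleGraph (Fin n)) (C Cp Cm SP SM : Finset (Fin n)) : Set (Fin (n+1) → ℝ) :=
  {x ∈ hansenPolytope G |
    ∀ y ∈ hansenPolytope G, lin (cvec G C Cp Cm SP SM) y ≤ lin (cvec G C Cp Cm SP SM) x}

def Mq (SP SM : Finset (Fin n)) : ℝ := (SP.card : ℝ) + (SM.card : ℝ)

lemma Mq_nonneg : 0 ≤ Mq SP SM := by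
  unfold Mq; positivity

lemma stable_subset_S (hS : IsStable G S) {X : Finset (Fin n)} (hX : X ⊆ S) : IsStable G X :=
  fun _ ha _ hb => hS (hX ha) (hX hb)

section QFace
variable (hdisj : Disjoint C S) (hcover : C ∪ S = Finset.univ)
  (hC : G.IsClique (↑C : Set (Fin n))) (hS : IsStable G S)
  (hq : QH G C S Cp Cm SP SM)

lemma qbound_pos (hdisj : Disjoint C S) (hq : QH G C S Cp Cm SP SM) :
    cvec G C Cp Cm SP SM 0 + Tp S (cvec G C Cp Cm SP SM) = Mq SP SM := by
  rw [cvec_zero, qTp hdisj hq, Mq]; ring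

lemma qH1neg (hdisj : Disjoint C S) (hq : QH G C S Cp Cm SP SM) :
    ∀ cc ∈ C, (-(cvec G C Cp Cm SP SM)) cc.succ ≤ pf G S (-(cvec G C Cp Cm SP SM)) cc := by
  intro cc hcc
  rw [pf_neg, Pi.neg_apply]
  have := qH2 hdisj hq cc hcc
  linarith

lemma qbound_neg (hdisj : Disjoint C S) (hq : QH G C S Cp Cm SP SM) :
    (-(cvec G C Cp Cm SP SM)) 0 + Tp S (-(cvec G C Cp Cm SP SM)) = Mq SP SM := by
  rw [Tp_neg, qSneg hdisj hq, Pi.neg_apply, cvec_zero]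
  rw [Finset.sum_congr rfl (fun s hs => cvec_succ_SM hq hs), Finset.sum_const, nsmul_eq_mul]
  unfold Mq; ring

lemma q_fval_eqP (hdisj : Disjoint C S) (hcover : C ∪ S = Finset.univ)
    (hC : G.IsClique (↑C : Set (Fin n))) (hq : QH G C S Cp Cm SP SM)
    {I : Finset (Fin n)} (hI : IsStable G I) :
    fval (cvec G C Cp Cm SP SM) I = Mq SP SM ↔ Pred G C S (cvec G C Cp Cm SP SM) I := by
  rw [← qbound_pos hdisj hq]
  exact fval_eq_iff hdisj hcover hC (qH1 hdisj hq) hI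

lemma q_fval_eqM (hdisj : Disjoint C S) (hcover : C ∪ S = Finset.univ)
    (hC : G.IsClique (↑C : Set (Fin n))) (hq : QH G C S Cp Cm SP SM)
    {I : Finset (Fin n)} (hI : IsStable G I) :
    fval (cvec G C Cp Cm SP SM) I = -(Mq SP SM) ↔
      Pred G C S (-(cvec G C Cp Cm SP SM)) I := by
  rw [← fval_eq_iff hdisj hcover hC (qH1neg hdisj hq) hI, qbound_neg hdisj hq, fval_neg]
  constructor <;> intro h <;> linarith

lemma q_fval_le (hdisj : Disjoint C S) (hcover : C ∪ S = Finset.univ)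
    (hC : G.IsClique (↑C : Set (Fin n))) (hq : QH G C S Cp Cm SP SM)
    {I : Finset (Fin n)} (hI : IsStable G I) :
    fval (cvec G C Cp Cm SP SM) I ≤ Mq SP SM := by
  rw [← qbound_pos hdisj hq]
  exact fval_le hdisj hcover hC (qH1 hdisj hq) hI

lemma q_fval_ge (hdisj : Disjoint C S) (hcover : C ∪ S = Finset.univ)
    (hC : G.IsClique (↑C : Set (Fin n))) (hq : QH G C S Cp Cm SP SM)
    {I : Finset (Fin n)} (hI : IsStable G I) :
    -(Mq SP SM) ≤ fval (cvec G C Cp Cm SP SM) I := by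
  have := fval_le hdisj hcover hC (qH1neg hdisj hq) hI
  rw [qbound_neg hdisj hq, fval_neg] at this
  linarith

lemma q_vert_le (hdisj : Disjoint C S) (hcover : C ∪ S = Finset.univ)
    (hC : G.IsClique (↑C : Set (Fin n))) (hq : QH G C S Cp Cm SP SM) :
    ∀ v ∈ Vfin G, lin (cvec G C Cp Cm SP SM) v ≤ Mq SP SM := by
  intro v hv
  rw [mem_Vfin] at hv
  obtain ⟨I, hI, (rfl | rfl)⟩ := hv
  · rw [lin_vert]; exact q_fval_le hdisj hcover hC hq hI
  · rw [lin_neg_vert]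
    have := q_fval_ge hdisj hcover hC hq hI
    linarith

lemma q_PredSP (hdisj : Disjoint C S) (hq : QH G C S Cp Cm SP SM) :
    Pred G C S (cvec G C Cp Cm SP SM) SP := by
  refine ⟨?_, ?_, ?_⟩
  · intro s hs
    rw [qSneg hdisj hq]
    exact fun h => Finset.disjoint_left.mp hq.2.2.2.2.2.1 hs h
  · intro cc hccSP hccC
    exact absurd (hq.2.2.2.1 hccSP) (Finset.disjoint_left.mp hdisj hccC)
  · intro s hs _
    rw [qSpos hdisj hq] at hs
    exact hs

lemma q_PredSM (hdisj : Disjoint C S) (hq : QH G C S Cp Cm SP SM) :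
    Pred G C S (-(cvec G C Cp Cm SP SM)) SM := by
  refine ⟨?_, ?_, ?_⟩
  · intro s hs
    rw [Sneg_neg, qSpos hdisj hq]
    exact fun h => Finset.disjoint_left.mp hq.2.2.2.2.2.1 h hs
  · intro cc hccSM hccC
    exact absurd (hq.2.2.2.2.1 hccSM) (Finset.disjoint_left.mp hdisj hccC)
  · intro s hs _
    rw [Spos_neg, qSneg hdisj hq] at hs
    exact hs

lemma q_mem_face_pos (hdisj : Disjoint C S) (hcover : C ∪ S = Finset.univ)
    (hC : G.IsClique (↑C : Set (Fin n))) (hS : IsStable G S) (hq : QH G C S Cp Cm SP SM)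
    {I : Finset (Fin n)} (hI : IsStable G I) :
    hansenVert I ∈ qface G C Cp Cm SP SM ↔ Pred G C S (cvec G C Cp Cm SP SM) I := by
  have hSPstable : IsStable G SP := stable_subset_S hS hq.2.2.2.1
  have hSPval : lin (cvec G C Cp Cm SP SM) (hansenVert SP) = Mq SP SM := by
    rw [lin_vert]
    exact (q_fval_eqP hdisj hcover hC hq hSPstable).mpr (q_PredSP hdisj hq)
  constructor
  · rintro ⟨hmem, hmax⟩
    rw [← q_fval_eqP hdisj hcover hC hq hI, ← lin_vert]
    refine le_antisymm ?_ ?_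
    · rw [lin_vert]; exact q_fval_le hdisj hcover hC hq hI
    · rw [← hSPval]
      exact hmax _ (vert_mem_hansen G hSPstable)
  · intro hPred
    refine ⟨vert_mem_hansen G hI, fun y hy => ?_⟩
    rw [lin_vert, (q_fval_eqP hdisj hcover hC hq hI).mpr hPred]
    exact hull_le G (q_vert_le hdisj hcover hC hq) hy

lemma q_mem_face_neg (hdisj : Disjoint C S) (hcover : C ∪ S = Finset.univ)
    (hC : G.IsClique (↑C : Set (Fin n))) (hS : IsStable G S) (hq : QH G C S Cp Cm SP SM)
    {I : Finset (Fin n)} (hI : IsStable G I) :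
    -hansenVert I ∈ qface G C Cp Cm SP SM ↔ Pred G C S (-(cvec G C Cp Cm SP SM)) I := by
  have hSPstable : IsStable G SP := stable_subset_S hS hq.2.2.2.1
  have hSPval : lin (cvec G C Cp Cm SP SM) (hansenVert SP) = Mq SP SM := by
    rw [lin_vert]
    exact (q_fval_eqP hdisj hcover hC hq hSPstable).mpr (q_PredSP hdisj hq)
  constructor
  · rintro ⟨hmem, hmax⟩
    rw [← q_fval_eqM hdisj hcover hC hq hI]
    have h1 : Mq SP SM ≤ -(fval (cvec G C Cp Cm SP SM) I) := by
      rw [← lin_neg_vert, ← hSPval]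
      exact hmax _ (vert_mem_hansen G hSPstable)
    have h2 := q_fval_ge hdisj hcover hC hq hI
    linarith
  · intro hPred
    refine ⟨neg_vert_mem_hansen G hI, fun y hy => ?_⟩
    rw [lin_neg_vert, (q_fval_eqM hdisj hcover hC hq hI).mpr hPred]
    rw [neg_neg]
    exact hull_le G (q_vert_le hdisj hcover hC hq) hy

end QFace
end
end HansenAux

namespace HansenAux
open Finset
open scoped Classical
noncomputable section
variable {n : ℕ} {G : SimpleGraph (Fin n)} {C S Cp Cm SP SM : Finset (Fin n)}

lemma vert_zero (I : Finset (Fin n)) : hansenVert I 0 = 1 := rfl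

lemma vert_succ (I : Finset (Fin n)) (i : Fin n) :
    hansenVert I i.succ = if i ∈ I then 1 else 0 := by
  simp [hansenVert]

lemma q_face_exposed :
    IsExposed ℝ (hansenPolytope G) (qface G C Cp Cm SP SM) :=
  fun _ => ⟨lin (cvec G C Cp Cm SP SM), rfl⟩

lemma q_face_nonempty (hdisj : Disjoint C S) (hcover : C ∪ S = Finset.univ)
    (hC : G.IsClique (↑C : Set (Fin n))) (hS : IsStable G S) (hq : QH G C S Cp Cm SP SM) :
    (qface G C Cp Cm SP SM).Nonempty := by
  refine ⟨hansenVert SP, ?_⟩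
  rw [q_mem_face_pos hdisj hcover hC hS hq (stable_subset_S hS hq.2.2.2.1)]
  exact q_PredSP hdisj hq

lemma q_face_primitive (hdisj : Disjoint C S) (hcover : C ∪ S = Finset.univ)
    (hC : G.IsClique (↑C : Set (Fin n))) (hS : IsStable G S) (hq : QH G C S Cp Cm SP SM) :
    ∀ ε : ℝ, ∀ B ⊆ C, ¬ (qface G C Cp Cm SP SM ⊆ hFace G ε B) := by
  intro ε B hB hsub
  have hSPmem : hansenVert SP ∈ qface G C Cp Cm SP SM := by
    rw [q_mem_face_pos hdisj hcover hC hS hq (stable_subset_S hS hq.2.2.2.1)]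
    exact q_PredSP hdisj hq
  have hSMmem : -hansenVert SM ∈ qface G C Cp Cm SP SM := by
    rw [q_mem_face_neg hdisj hcover hC hS hq (stable_subset_S hS hq.2.2.2.2.1)]
    exact q_PredSM hdisj hq
  have hsum1 : ∑ i ∈ B, hansenVert SP i.succ = 0 :=
    Finset.sum_eq_zero fun i hi => by
      rw [vert_succ, if_neg (not_mem_SP_of_C hq hdisj (hB hi))]
  have hsum2 : ∑ i ∈ B, (-hansenVert SM) i.succ = 0 :=
    Finset.sum_eq_zero fun i hi => by
      rw [Pi.neg_apply, vert_succ, if_neg (not_mem_SM_of_C hq hdisj (hB hi)), neg_zero]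
  have h1 := (hsub hSPmem).2
  have h2 := (hsub hSMmem).2
  rw [hsum1, vert_zero] at h1
  rw [hsum2, Pi.neg_apply, vert_zero] at h2
  have e1 : -ε = 1 := by linarith [h1]; 
  have e2 : ε = 1 := by
    have : ε * (-(-1) + 2 * 0) = 1 := h2
    linarith [this]
  linarith

end
end HansenAux

namespace HansenAux
open Finset
open scoped Classical
noncomputable section
variable {n : ℕ} {G : SimpleGraph (Fin n)} {C S Cp Cm SP SM : Finset (Fin n)}

lemma no_adj_of_cast_card_eq_zero {X : Finset (Fin n)} {cc : Fin n}
    (h : ((X.filter (fun s => G.Adj cc s)).card : ℝ) = 0) : ∀ s ∈ X, ¬ G.Adj cc s := by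
  intro s hs hadj
  have h0 : (X.filter (fun s => G.Adj cc s)).card = 0 := by exact_mod_cast h
  rw [Finset.card_eq_zero] at h0
  exact absurd (Finset.mem_filter.mpr ⟨hs, hadj⟩) (by rw [h0]; exact Finset.notMem_empty s)

lemma hA_contra (hq : QH G C S Cp Cm SP SM) {cc : Fin n} (hcc : cc ∈ Cp ∪ Cm)
    (hp : ((SP.filter (fun s => G.Adj cc s)).card : ℝ) = 0)
    (hm : ((SM.filter (fun s => G.Adj cc s)).card : ℝ) = 0) : False := by
  obtain ⟨s, hs, hadj⟩ := hq.2.2.2.2.2.2 cc hcc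
  rw [Finset.mem_union] at hs
  rcases hs with hs | hs
  · exact no_adj_of_cast_card_eq_zero hp s hs hadj
  · exact no_adj_of_cast_card_eq_zero hm s hs hadj

section Good
variable (hdisj : Disjoint C S) (hq : QH G C S Cp Cm SP SM)

lemma good_Cp (hdisj : Disjoint C S) (hq : QH G C S Cp Cm SP SM) {cc : Fin n} (hcc : cc ∈ Cp) :
    cvec G C Cp Cm SP SM cc.succ = pf G S (cvec G C Cp Cm SP SM) cc := by
  rw [cvec_succ_Cp hdisj hq hcc, qpf hdisj hq]

lemma good_Cm (hdisj : Disjoint C S) (hq : QH G C S Cp Cm SP SM) {cc : Fin n} (hcc : cc ∈ Cm) :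
    cvec G C Cp Cm SP SM cc.succ = mf G S (cvec G C Cp Cm SP SM) cc := by
  rw [cvec_succ_Cm hdisj hq hcc, qmf hdisj hq]

lemma goodpos_not_Cm (hdisj : Disjoint C S) (hq : QH G C S Cp Cm SP SM) {cc : Fin n}
    (hcc : cc ∈ Cm) :
    ¬ (cvec G C Cp Cm SP SM cc.succ = pf G S (cvec G C Cp Cm SP SM) cc) := by
  rw [cvec_succ_Cm hdisj hq hcc, qpf hdisj hq]
  intro h
  have h1 := Nat.cast_nonneg (α := ℝ) ((SP.filter (fun s => G.Adj cc s)).card)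
  have h2 := Nat.cast_nonneg (α := ℝ) ((SM.filter (fun s => G.Adj cc s)).card)
  exact hA_contra hq (Finset.mem_union_right _ hcc) (by linarith) (by linarith)

lemma goodneg_not_Cp (hdisj : Disjoint C S) (hq : QH G C S Cp Cm SP SM) {cc : Fin n}
    (hcc : cc ∈ Cp) :
    ¬ (cvec G C Cp Cm SP SM cc.succ = mf G S (cvec G C Cp Cm SP SM) cc) := by
  rw [cvec_succ_Cp hdisj hq hcc, qmf hdisj hq]
  intro h
  have h1 := Nat.cast_nonneg (α := ℝ) ((SP.filter (fun s => G.Adj cc s)).card)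
  have h2 := Nat.cast_nonneg (α := ℝ) ((SM.filter (fun s => G.Adj cc s)).card)
  exact hA_contra hq (Finset.mem_union_left _ hcc) (by linarith) (by linarith)

lemma good_C0_pos (hdisj : Disjoint C S) (hq : QH G C S Cp Cm SP SM) {cc : Fin n}
    (hcc : cc ∈ C) (h1 : cc ∉ Cp) (h2 : cc ∉ Cm)
    (h : cvec G C Cp Cm SP SM cc.succ = pf G S (cvec G C Cp Cm SP SM) cc) :
    ((SP.filter (fun s => G.Adj cc s)).card : ℝ) = 0 ∧
    ((SM.filter (fun s => G.Adj cc s)).card : ℝ) = 0 := by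
  rw [cvec_succ_C0 hdisj hq hcc h1 h2, qpf hdisj hq] at h
  have hp := Nat.cast_nonneg (α := ℝ) ((SP.filter (fun s => G.Adj cc s)).card)
  have hm := Nat.cast_nonneg (α := ℝ) ((SM.filter (fun s => G.Adj cc s)).card)
  constructor <;> linarith

lemma good_C0_neg (hdisj : Disjoint C S) (hq : QH G C S Cp Cm SP SM) {cc : Fin n}
    (hcc : cc ∈ C) (h1 : cc ∉ Cp) (h2 : cc ∉ Cm)
    (h : cvec G C Cp Cm SP SM cc.succ = mf G S (cvec G C Cp Cm SP SM) cc) :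
    ((SP.filter (fun s => G.Adj cc s)).card : ℝ) = 0 ∧
    ((SM.filter (fun s => G.Adj cc s)).card : ℝ) = 0 := by
  rw [cvec_succ_C0 hdisj hq hcc h1 h2, qmf hdisj hq] at h
  have hp := Nat.cast_nonneg (α := ℝ) ((SP.filter (fun s => G.Adj cc s)).card)
  have hm := Nat.cast_nonneg (α := ℝ) ((SM.filter (fun s => G.Adj cc s)).card)
  constructor <;> linarith

end Good

lemma stable_insert_C (hS : IsStable G S) {cc : Fin n} {X : Finset (Fin n)} (hX : X ⊆ S)
    (hadj : ∀ s ∈ X, ¬ G.Adj cc s) : IsStable G (insert cc X) := by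
  intro a ha b hb
  rw [Finset.mem_insert] at ha hb
  rcases ha with rfl | ha <;> rcases hb with rfl | hb
  · exact G.irrefl
  · exact hadj b hb
  · exact fun h => hadj a ha h.symm
  · exact hS (hX ha) (hX hb)

section RLemmas
lemma R_SP (hdisj : Disjoint C S) (hcover : C ∪ S = Finset.univ)
    (hC : G.IsClique (↑C : Set (Fin n))) (hS : IsStable G S) (hq : QH G C S Cp Cm SP SM)
    (s : Fin n) :
    s ∈ SP ↔ s ∈ S ∧ ∀ J, IsStable G J → -hansenVert J ∈ qface G C Cp Cm SP SM → s ∉ J := by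
  have hSnn : Sneg S (-(cvec G C Cp Cm SP SM)) = SP := by rw [Sneg_neg, qSpos hdisj hq]
  have hSpn : Spos S (-(cvec G C Cp Cm SP SM)) = SM := by rw [Spos_neg, qSneg hdisj hq]
  constructor
  · intro hs
    refine ⟨hq.2.2.2.1 hs, fun J hJ hmem hsJ => ?_⟩
    have hPred := (q_mem_face_neg hdisj hcover hC hS hq hJ).mp hmem
    exact hPred.1 s hsJ (by rw [hSnn]; exact hs)
  · rintro ⟨hsS, hall⟩
    by_contra hsp
    have hJsub : insert s SM ⊆ S := Finset.insert_subset hsS hq.2.2.2.2.1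
    have hJ : IsStable G (insert s SM) := stable_subset_S hS hJsub
    have hmem : -hansenVert (insert s SM) ∈ qface G C Cp Cm SP SM := by
      rw [q_mem_face_neg hdisj hcover hC hS hq hJ]
      refine ⟨?_, ?_, ?_⟩
      · intro x hx
        rw [hSnn]
        rw [Finset.mem_insert] at hx
        rcases hx with rfl | hx
        · exact hsp
        · exact fun h => Finset.disjoint_left.mp hq.2.2.2.2.2.1 h hx
      · intro x hxJ hxC
        exact absurd (hJsub hxJ) (Finset.disjoint_left.mp hdisj hxC)
      · intro x hx _
        rw [hSpn] at hx
        exact Finset.mem_insert_of_mem hx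
    exact hall _ hJ hmem (Finset.mem_insert_self s SM)

lemma R_SM (hdisj : Disjoint C S) (hcover : C ∪ S = Finset.univ)
    (hC : G.IsClique (↑C : Set (Fin n))) (hS : IsStable G S) (hq : QH G C S Cp Cm SP SM)
    (s : Fin n) :
    s ∈ SM ↔ s ∈ S ∧ ∀ J, IsStable G J → hansenVert J ∈ qface G C Cp Cm SP SM → s ∉ J := by
  constructor
  · intro hs
    refine ⟨hq.2.2.2.2.1 hs, fun J hJ hmem hsJ => ?_⟩
    have hPred := (q_mem_face_pos hdisj hcover hC hS hq hJ).mp hmem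
    exact hPred.1 s hsJ (by rw [qSneg hdisj hq]; exact hs)
  · rintro ⟨hsS, hall⟩
    by_contra hsm
    have hJsub : insert s SP ⊆ S := Finset.insert_subset hsS hq.2.2.2.1
    have hJ : IsStable G (insert s SP) := stable_subset_S hS hJsub
    have hmem : hansenVert (insert s SP) ∈ qface G C Cp Cm SP SM := by
      rw [q_mem_face_pos hdisj hcover hC hS hq hJ]
      refine ⟨?_, ?_, ?_⟩
      · intro x hx
        rw [qSneg hdisj hq]
        rw [Finset.mem_insert] at hx
        rcases hx with rfl | hx
        · exact hsm
        · exact fun h => Finset.disjoint_left.mp hq.2.2.2.2.2.1 hx h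
      · intro x hxJ hxC
        exact absurd (hJsub hxJ) (Finset.disjoint_left.mp hdisj hxC)
      · intro x hx _
        rw [qSpos hdisj hq] at hx
        exact Finset.mem_insert_of_mem hx
    exact hall _ hJ hmem (Finset.mem_insert_self s SP)

lemma R_Cp (hdisj : Disjoint C S) (hcover : C ∪ S = Finset.univ)
    (hC : G.IsClique (↑C : Set (Fin n))) (hS : IsStable G S) (hq : QH G C S Cp Cm SP SM)
    (cc : Fin n) :
    cc ∈ Cp ↔ cc ∈ C ∧
      (∃ I, IsStable G I ∧ hansenVert I ∈ qface G C Cp Cm SP SM ∧ cc ∈ I) ∧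
      (∀ J, IsStable G J → -hansenVert J ∈ qface G C Cp Cm SP SM → cc ∉ J) := by
  have hSnn : Sneg S (-(cvec G C Cp Cm SP SM)) = SP := by rw [Sneg_neg, qSpos hdisj hq]
  have hSpn : Spos S (-(cvec G C Cp Cm SP SM)) = SM := by rw [Spos_neg, qSneg hdisj hq]
  constructor
  · intro hcc
    have hccC : cc ∈ C := hq.1 hcc
    refine ⟨hccC, ?_, ?_⟩
    · set I := insert cc (SP.filter (fun s => ¬ G.Adj cc s)) with hIdef
      have hfsub : SP.filter (fun s => ¬ G.Adj cc s) ⊆ S :=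
        (Finset.filter_subset _ _).trans hq.2.2.2.1
      have hI : IsStable G I :=
        stable_insert_C hS hfsub (fun s hs => (Finset.mem_filter.mp hs).2)
      refine ⟨I, hI, ?_, Finset.mem_insert_self _ _⟩
      rw [q_mem_face_pos hdisj hcover hC hS hq hI]
      refine ⟨?_, ?_, ?_⟩
      · intro x hx
        rw [qSneg hdisj hq]
        rw [hIdef, Finset.mem_insert] at hx
        rcases hx with rfl | hx
        · exact not_mem_SM_of_C hq hdisj hccC
        · exact fun h =>
            Finset.disjoint_left.mp hq.2.2.2.2.2.1 (Finset.mem_of_mem_filter x hx) h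
      · intro x hxI hxC
        rw [hIdef, Finset.mem_insert] at hxI
        rcases hxI with rfl | hxI
        · exact good_Cp hdisj hq hcc
        · exact absurd (hfsub hxI) (Finset.disjoint_left.mp hdisj hxC)
      · intro s hs hna
        rw [qSpos hdisj hq] at hs
        have : ¬ G.Adj cc s := hna cc (Finset.mem_insert_self _ _) hccC
        exact Finset.mem_insert_of_mem (Finset.mem_filter.mpr ⟨hs, this⟩)
    · intro J hJ hmem hccJ
      have hPred := (q_mem_face_neg hdisj hcover hC hS hq hJ).mp hmem
      have := hPred.2.1 cc hccJ hccC
      rw [pf_neg, Pi.neg_apply] at this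
      exact goodneg_not_Cp hdisj hq hcc (by linarith)
  · rintro ⟨hccC, ⟨I, hI, hmem, hccI⟩, hall⟩
    have hPred := (q_mem_face_pos hdisj hcover hC hS hq hI).mp hmem
    have hgood := hPred.2.1 cc hccI hccC
    by_contra hccp
    by_cases hccm : cc ∈ Cm
    · exact goodpos_not_Cm hdisj hq hccm hgood
    · obtain ⟨hp0, hm0⟩ := good_C0_pos hdisj hq hccC hccp hccm hgood
      have hnoadj : ∀ s ∈ SM, ¬ G.Adj cc s := no_adj_of_cast_card_eq_zero hm0
      have hJ : IsStable G (insert cc SM) := stable_insert_C hS hq.2.2.2.2.1 hnoadj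
      have hmem2 : -hansenVert (insert cc SM) ∈ qface G C Cp Cm SP SM := by
        rw [q_mem_face_neg hdisj hcover hC hS hq hJ]
        refine ⟨?_, ?_, ?_⟩
        · intro x hx
          rw [hSnn]
          rw [Finset.mem_insert] at hx
          rcases hx with rfl | hx
          · exact not_mem_SP_of_C hq hdisj hccC
          · exact fun h => Finset.disjoint_left.mp hq.2.2.2.2.2.1 h hx
        · intro x hxJ hxC
          rw [Finset.mem_insert] at hxJ
          rcases hxJ with rfl | hxJ
          · rw [pf_neg, Pi.neg_apply, cvec_succ_C0 hdisj hq hccC hccp hccm,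
              qmf hdisj hq, hp0, hm0]
            ring
          · exact absurd (hq.2.2.2.2.1 hxJ) (Finset.disjoint_left.mp hdisj hxC)
        · intro x hx _
          rw [hSpn] at hx
          exact Finset.mem_insert_of_mem hx
      exact hall _ hJ hmem2 (Finset.mem_insert_self _ _)

lemma R_Cm (hdisj : Disjoint C S) (hcover : C ∪ S = Finset.univ)
    (hC : G.IsClique (↑C : Set (Fin n))) (hS : IsStable G S) (hq : QH G C S Cp Cm SP SM)
    (cc : Fin n) :
    cc ∈ Cm ↔ cc ∈ C ∧
      (∃ I, IsStable G I ∧ -hansenVert I ∈ qface G C Cp Cm SP SM ∧ cc ∈ I) ∧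
      (∀ J, IsStable G J → hansenVert J ∈ qface G C Cp Cm SP SM → cc ∉ J) := by
  have hSnn : Sneg S (-(cvec G C Cp Cm SP SM)) = SP := by rw [Sneg_neg, qSpos hdisj hq]
  have hSpn : Spos S (-(cvec G C Cp Cm SP SM)) = SM := by rw [Spos_neg, qSneg hdisj hq]
  constructor
  · intro hcc
    have hccC : cc ∈ C := hq.2.1 hcc
    refine ⟨hccC, ?_, ?_⟩
    · set I := insert cc (SM.filter (fun s => ¬ G.Adj cc s)) with hIdef
      have hfsub : SM.filter (fun s => ¬ G.Adj cc s) ⊆ S :=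
        (Finset.filter_subset _ _).trans hq.2.2.2.2.1
      have hI : IsStable G I :=
        stable_insert_C hS hfsub (fun s hs => (Finset.mem_filter.mp hs).2)
      refine ⟨I, hI, ?_, Finset.mem_insert_self _ _⟩
      rw [q_mem_face_neg hdisj hcover hC hS hq hI]
      refine ⟨?_, ?_, ?_⟩
      · intro x hx
        rw [hSnn]
        rw [hIdef, Finset.mem_insert] at hx
        rcases hx with rfl | hx
        · exact not_mem_SP_of_C hq hdisj hccC
        · exact fun h =>
            Finset.disjoint_left.mp hq.2.2.2.2.2.1 h (Finset.mem_of_mem_filter x hx)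
      · intro x hxI hxC
        rw [hIdef, Finset.mem_insert] at hxI
        rcases hxI with rfl | hxI
        · rw [pf_neg, Pi.neg_apply]
          have := good_Cm hdisj hq hcc
          linarith
        · exact absurd (hfsub hxI) (Finset.disjoint_left.mp hdisj hxC)
      · intro s hs hna
        rw [hSpn] at hs
        have : ¬ G.Adj cc s := hna cc (Finset.mem_insert_self _ _) hccC
        exact Finset.mem_insert_of_mem (Finset.mem_filter.mpr ⟨hs, this⟩)
    · intro J hJ hmem hccJ
      have hPred := (q_mem_face_pos hdisj hcover hC hS hq hJ).mp hmem
      exact goodpos_not_Cm hdisj hq hcc (hPred.2.1 cc hccJ hccC)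
  · rintro ⟨hccC, ⟨I, hI, hmem, hccI⟩, hall⟩
    have hPred := (q_mem_face_neg hdisj hcover hC hS hq hI).mp hmem
    have hgood' := hPred.2.1 cc hccI hccC
    rw [pf_neg, Pi.neg_apply] at hgood'
    have hgood : cvec G C Cp Cm SP SM cc.succ = mf G S (cvec G C Cp Cm SP SM) cc := by
      linarith
    by_contra hccm
    by_cases hccp : cc ∈ Cp
    · exact goodneg_not_Cp hdisj hq hccp hgood
    · obtain ⟨hp0, hm0⟩ := good_C0_neg hdisj hq hccC hccp hccm hgood
      have hnoadj : ∀ s ∈ SP, ¬ G.Adj cc s := no_adj_of_cast_card_eq_zero hp0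
      have hJ : IsStable G (insert cc SP) := stable_insert_C hS hq.2.2.2.1 hnoadj
      have hmem2 : hansenVert (insert cc SP) ∈ qface G C Cp Cm SP SM := by
        rw [q_mem_face_pos hdisj hcover hC hS hq hJ]
        refine ⟨?_, ?_, ?_⟩
        · intro x hx
          rw [qSneg hdisj hq]
          rw [Finset.mem_insert] at hx
          rcases hx with rfl | hx
          · exact not_mem_SM_of_C hq hdisj hccC
          · exact fun h => Finset.disjoint_left.mp hq.2.2.2.2.2.1 hx h
        · intro x hxJ hxC
          rw [Finset.mem_insert] at hxJ
          rcases hxJ with rfl | hxJ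
          · rw [cvec_succ_C0 hdisj hq hccC hccp hccm, qpf hdisj hq, hp0, hm0]
            ring
          · exact absurd (hq.2.2.2.1 hxJ) (Finset.disjoint_left.mp hdisj hxC)
        · intro x hx _
          rw [qSpos hdisj hq] at hx
          exact Finset.mem_insert_of_mem hx
      exact hall _ hJ hmem2 (Finset.mem_insert_self _ _)

end RLemmas
end
end HansenAux

namespace HansenAux
open Finset
open scoped Classical
noncomputable section
variable {n : ℕ} {G : SimpleGraph (Fin n)} {C S Cp Cm SP SM : Finset (Fin n)}

lemma inter_card_le_one (hC : G.IsClique (↑C : Set (Fin n))) {I B : Finset (Fin n)}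
    (hI : IsStable G I) (hB : B ⊆ C) : (I ∩ B).card ≤ 1 := by
  by_contra h
  push_neg at h
  obtain ⟨a, ha, b, hb, hab⟩ := Finset.one_lt_card.mp h
  have hadj : G.Adj a b :=
    hC (Finset.mem_coe.mpr (hB (Finset.mem_inter.mp ha).2))
      (Finset.mem_coe.mpr (hB (Finset.mem_inter.mp hb).2)) hab
  exact hI (Finset.mem_inter.mp ha).1 (Finset.mem_inter.mp hb).1 hadj

lemma hansen_symm {x : Fin (n+1) → ℝ} (hx : x ∈ hansenPolytope G) :
    -x ∈ hansenPolytope G := by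
  rw [hansen_eq] at hx ⊢
  have hVeq : -(↑(Vfin G) : Set (Fin (n+1) → ℝ)) = ↑(Vfin G) := by
    ext y
    rw [Set.mem_neg, Finset.mem_coe, Finset.mem_coe]
    constructor
    · intro h
      have := neg_mem_Vfin G h
      rwa [neg_neg] at this
    · exact fun h => neg_mem_Vfin G h
  have : -x ∈ -(convexHull ℝ (↑(Vfin G) : Set (Fin (n+1) → ℝ))) := by
    rw [Set.mem_neg, neg_neg]; exact hx
  rwa [← convexHull_neg, hVeq] at this

lemma q_vert_ge (hdisj : Disjoint C S) (hcover : C ∪ S = Finset.univ)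
    (hC : G.IsClique (↑C : Set (Fin n))) (hq : QH G C S Cp Cm SP SM) :
    ∀ v ∈ Vfin G, -(Mq SP SM) ≤ lin (cvec G C Cp Cm SP SM) v := by
  intro v hv
  rw [mem_Vfin] at hv
  obtain ⟨I, hI, (rfl | rfl)⟩ := hv
  · rw [lin_vert]; exact q_fval_ge hdisj hcover hC hq hI
  · rw [lin_neg_vert]
    have := q_fval_le hdisj hcover hC hq hI
    linarith

lemma q_face_eq (hdisj : Disjoint C S) (hcover : C ∪ S = Finset.univ)
    (hC : G.IsClique (↑C : Set (Fin n))) (hS : IsStable G S) (hq : QH G C S Cp Cm SP SM) :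
    qface G C Cp Cm SP SM =
      {x ∈ hansenPolytope G | lin (cvec G C Cp Cm SP SM) x = Mq SP SM} := by
  have hSPstable : IsStable G SP := stable_subset_S hS hq.2.2.2.1
  have hSPval : lin (cvec G C Cp Cm SP SM) (hansenVert SP) = Mq SP SM := by
    rw [lin_vert]
    exact (q_fval_eqP hdisj hcover hC hq hSPstable).mpr (q_PredSP hdisj hq)
  ext x
  constructor
  · rintro ⟨hxP, hxmax⟩
    refine ⟨hxP, le_antisymm (hull_le G (q_vert_le hdisj hcover hC hq) hxP) ?_⟩
    rw [← hSPval]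
    exact hxmax _ (vert_mem_hansen G hSPstable)
  · rintro ⟨hxP, hxval⟩
    refine ⟨hxP, fun y hy => ?_⟩
    rw [hxval]
    exact hull_le G (q_vert_le hdisj hcover hC hq) hy

/-- If the maximum is attained by a subset of `S`, then coefficients on `C` are dominated. -/
lemma H1_of_eq (hdisj : Disjoint C S) (hcover : C ∪ S = Finset.univ)
    (hC : G.IsClique (↑C : Set (Fin n))) (hS : IsStable G S) {c : Fin (n+1) → ℝ} {M : ℝ}
    (hfle : ∀ I, IsStable G I → fval c I ≤ M) (hM : c 0 + Tp S c = M) :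
    ∀ cc ∈ C, c cc.succ ≤ pf G S c cc := by
  intro cc hccC
  set X := (Spos S c).filter (fun s => ¬ G.Adj cc s) with hXdef
  have hXsub : X ⊆ S := (Finset.filter_subset _ _).trans (Finset.filter_subset _ _)
  have hccX : cc ∉ X := fun h => Finset.disjoint_left.mp hdisj hccC (hXsub h)
  have hI : IsStable G (insert cc X) :=
    stable_insert_C hS hXsub (fun s hs => (Finset.mem_filter.mp hs).2)
  have hsum : pf G S c cc + ∑ s ∈ X, c s.succ = Tp S c :=
    Finset.sum_filter_add_sum_filter_not (Spos S c) (fun s => G.Adj cc s) _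
  have hval : fval c (insert cc X) = c 0 + c cc.succ + ∑ s ∈ X, c s.succ := by
    rw [fval, Finset.sum_insert hccX]; ring
  have := hfle _ hI
  rw [hval] at this
  linarith

/-- Step 3: if `D₊ > 0` (the maximum is not attained on the `S`-side), then the face
is contained in a type-(1) facet `[1, B]`. -/
lemma step3 (hdisj : Disjoint C S) (hcover : C ∪ S = Finset.univ)
    (hC : G.IsClique (↑C : Set (Fin n))) (hS : IsStable G S) {c : Fin (n+1) → ℝ} {M : ℝ}
    (hvle : ∀ v ∈ Vfin G, lin c v ≤ M)
    (hDp : c 0 + Tp S c < M) :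
    ∃ B ⊆ C, ∀ x ∈ hansenPolytope G, lin c x = M → x ∈ hFace G 1 B := by
  have hfle : ∀ I, IsStable G I → fval c I ≤ M := fun I hI => by
    have := hvle (hansenVert I) (mem_Vfin G |>.mpr ⟨I, hI, Or.inl rfl⟩)
    rwa [lin_vert] at this
  have hfge : ∀ I, IsStable G I → -M ≤ fval c I := fun I hI => by
    have := hvle (-hansenVert I) (mem_Vfin G |>.mpr ⟨I, hI, Or.inr rfl⟩)
    rw [lin_neg_vert] at this
    linarith
  have hSneg_stable : IsStable G (Sneg S c) := stable_subset_S hS (Finset.filter_subset _ _)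
  have hDm : -(c 0) + Tp S (-c) ≤ M := by
    have h := hfge _ hSneg_stable
    rw [Tp_neg]
    rw [fval] at h
    linarith
  set B := C.filter (fun cc => ∀ J, IsStable G J → fval c J = -M → cc ∉ J) with hBdef
  refine ⟨B, Finset.filter_subset _ _, ?_⟩
  have hBC : B ⊆ C := Finset.filter_subset _ _
  have hIB : ∀ I, IsStable G I → ((I ∩ B).card : ℝ) ≤ 1 := fun I hI => by
    exact_mod_cast inter_card_le_one hC hI hBC
  have hhv1 : ∀ v ∈ Vfin G, lin (hB 1 B) v ≤ 1 := by
    intro v hv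
    rw [mem_Vfin] at hv
    obtain ⟨I, hI, (rfl | rfl)⟩ := hv
    · rw [lin_vert, fval_hB]
      have h1 := hIB I hI
      linarith
    · rw [lin_neg_vert, fval_hB]
      have h2 := Nat.cast_nonneg (α := ℝ) ((I ∩ B).card)
      linarith
  have hhv2 : ∀ v ∈ Vfin G, -1 ≤ lin (hB 1 B) v := by
    intro v hv
    rw [mem_Vfin] at hv
    obtain ⟨I, hI, (rfl | rfl)⟩ := hv
    · rw [lin_vert, fval_hB]
      have h2 := Nat.cast_nonneg (α := ℝ) ((I ∩ B).card)
      linarith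
    · rw [lin_neg_vert, fval_hB]
      have h1 := hIB I hI
      linarith
  have heq : ∀ v ∈ Vfin G, lin c v = M → lin (hB 1 B) v = 1 := by
    intro v hv hvM
    rw [mem_Vfin] at hv
    obtain ⟨I, hI, (rfl | rfl)⟩ := hv
    · -- positive vertex attaining the maximum
      rw [lin_vert] at hvM
      rcases stable_interC G C hC hI with hIC | ⟨cc, hIC⟩
      · exfalso
        have := (fval_le_empty (c := c) hIC (I_subset_S_of_interC_empty hcover hIC)).1
        linarith
      · have hcc : cc ∈ I ∧ cc ∈ C := by
          have h := Finset.mem_singleton_self cc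
          rw [← hIC, Finset.mem_inter] at h
          exact h
        have hccB : cc ∈ B := by
          rw [hBdef, Finset.mem_filter]
          refine ⟨hcc.2, fun J hJ hJval hccJ => ?_⟩
          have hJC : J ∩ C = {cc} := by
            rcases stable_interC G C hC hJ with hJC | ⟨c', hJC⟩
            · exact absurd (Finset.mem_inter.mpr ⟨hccJ, hcc.2⟩)
                (by rw [hJC]; exact Finset.notMem_empty cc)
            · have : cc ∈ J ∩ C := Finset.mem_inter.mpr ⟨hccJ, hcc.2⟩
              rw [hJC, Finset.mem_singleton] at this
              rw [hJC, this]
          have h1 := (fval_le_single (c := -c) hdisj hcover hJ hJC).1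
          rw [fval_neg, hJval, pf_neg] at h1
          have h2 := (fval_le_single (c := c) hdisj hcover hI hIC).1
          rw [hvM] at h2
          have h3 := mf_nonpos G S c cc
          have h4 := pf_nonneg G S c cc
          have h5 : (-c) 0 = -(c 0) := rfl
          have h6 : (-c) cc.succ = -(c cc.succ) := rfl
          rw [h5, h6] at h1
          linarith
        have hcard : (I ∩ B).card = 1 := by
          refine le_antisymm (inter_card_le_one hC hI hBC) ?_
          exact Finset.card_pos.mpr ⟨cc, Finset.mem_inter.mpr ⟨hcc.1, hccB⟩⟩
        rw [lin_vert, fval_hB, hcard]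
        norm_num
    · -- negative vertex attaining the maximum
      rw [lin_neg_vert] at hvM
      have hIval : fval c I = -M := by linarith
      have hempty : I ∩ B = ∅ := by
        rw [Finset.eq_empty_iff_forall_notMem]
        intro x hx
        have hxI := (Finset.mem_inter.mp hx).1
        have hxB := (Finset.mem_inter.mp hx).2
        rw [hBdef, Finset.mem_filter] at hxB
        exact hxB.2 I hI hIval hxI
      rw [lin_neg_vert, fval_hB, hempty]
      norm_num
  have htr := transfer G c (hB 1 B) M 1 (by norm_num) hvle hhv1 hhv2 heq
  intro x hxP hxM
  refine ⟨hxP, ?_⟩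
  have := htr x hxP hxM
  rwa [lin_hB] at this

end
end HansenAux

namespace HansenAux
open Finset
open scoped Classical
noncomputable section
variable {n : ℕ} {G : SimpleGraph (Fin n)} {C S : Finset (Fin n)}

lemma pf_zero_iff {c : Fin (n+1) → ℝ} {cc : Fin n} :
    pf G S c cc = 0 ↔ ((Spos S c).filter (fun s => G.Adj cc s)) = ∅ := by
  constructor
  · intro h
    by_contra hne
    rw [← Finset.not_nonempty_iff_eq_empty, not_not] at hne
    have : 0 < pf G S c cc :=
      Finset.sum_pos (fun s hs =>
        (Finset.mem_filter.mp (Finset.mem_filter.mp hs).1).2) hne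
    linarith
  · intro h
    rw [pf, h, Finset.sum_empty]

lemma mf_zero_iff {c : Fin (n+1) → ℝ} {cc : Fin n} :
    mf G S c cc = 0 ↔ ((Sneg S c).filter (fun s => G.Adj cc s)) = ∅ := by
  constructor
  · intro h
    by_contra hne
    rw [← Finset.not_nonempty_iff_eq_empty, not_not] at hne
    have hpos : 0 < ∑ s ∈ (Sneg S c).filter (fun s => G.Adj cc s), -(c s.succ) :=
      Finset.sum_pos (fun s hs => by
        have := (Finset.mem_filter.mp (Finset.mem_filter.mp hs).1).2
        linarith) hne
    rw [Finset.sum_neg_distrib] at hpos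
    rw [mf] at h
    linarith
  · intro h
    rw [mf, h, Finset.sum_empty]

lemma cast_card_zero_iff {X : Finset (Fin n)} : ((X.card : ℝ) = 0) ↔ X = ∅ := by
  rw [Nat.cast_eq_zero, Finset.card_eq_zero]

lemma surj (hdisj : Disjoint C S) (hcover : C ∪ S = Finset.univ)
    (hC : G.IsClique (↑C : Set (Fin n))) (hS : IsStable G S) {F : Set (Fin (n+1) → ℝ)}
    (hexp : IsExposed ℝ (hansenPolytope G) F) (hne : F.Nonempty)
    (hprim : ∀ ε : ℝ, (ε = 1 ∨ ε = -1) → ∀ B ⊆ C, ¬ F ⊆ hFace G ε B) :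
    ∃ Cp' Cm' SP' SM', QH G C S Cp' Cm' SP' SM' ∧ F = qface G C Cp' Cm' SP' SM' := by
  obtain ⟨l, hFeq⟩ := hexp hne
  set c : Fin (n+1) → ℝ := fun j => l (Pi.single j 1) with hcdef
  have hlc : ∀ x, l x = lin c x := by
    intro x
    have hxdecomp : x = ∑ j, x j • (Pi.single j 1 : Fin (n+1) → ℝ) := by
      funext k
      rw [Finset.sum_apply]
      have hterm : ∀ j, (x j • (Pi.single j 1 : Fin (n+1) → ℝ)) k = if k = j then x j else 0 := by
        intro j
        rw [Pi.smul_apply, Pi.single_apply, smul_eq_mul]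
        split_ifs <;> ring
      rw [Finset.sum_congr rfl fun j _ => hterm j, Finset.sum_ite_eq]
      simp
    conv_lhs => rw [hxdecomp]
    rw [map_sum, lin_apply]
    refine Finset.sum_congr rfl fun j _ => ?_
    rw [map_smul, smul_eq_mul, hcdef]
    ring
  have hF1 : F = {x ∈ hansenPolytope G | ∀ y ∈ hansenPolytope G, lin c y ≤ lin c x} := by
    rw [hFeq]
    ext x
    simp only [Set.mem_setOf_eq, hlc]
  obtain ⟨x₀, hx₀⟩ := hne
  rw [hF1] at hx₀
  obtain ⟨hx₀P, hx₀max⟩ := hx₀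
  set M := lin c x₀ with hMdef
  have hVsubP : ↑(Vfin G) ⊆ hansenPolytope G := by
    rw [hansen_eq]; exact subset_convexHull ℝ _
  have hvle : ∀ v ∈ Vfin G, lin c v ≤ M := fun v hv => hx₀max v (hVsubP hv)
  have hF2 : F = {x ∈ hansenPolytope G | lin c x = M} := by
    rw [hF1]
    ext x
    constructor
    · rintro ⟨hxP, hxmax⟩
      exact ⟨hxP, le_antisymm (hull_le G hvle hxP) (hxmax x₀ hx₀P)⟩
    · rintro ⟨hxP, hxval⟩
      exact ⟨hxP, fun y hy => by rw [hxval]; exact hull_le G hvle hy⟩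
  have hfle : ∀ I, IsStable G I → fval c I ≤ M := fun I hI => by
    have := hvle (hansenVert I) (mem_Vfin G |>.mpr ⟨I, hI, Or.inl rfl⟩)
    rwa [lin_vert] at this
  have hfge : ∀ I, IsStable G I → -M ≤ fval c I := fun I hI => by
    have := hvle (-hansenVert I) (mem_Vfin G |>.mpr ⟨I, hI, Or.inr rfl⟩)
    rw [lin_neg_vert] at this
    linarith
  have hM0 : 0 ≤ M := by
    have hstable : IsStable G (∅ : Finset (Fin n)) :=
      fun a ha => absurd ha (Finset.notMem_empty a)
    have h1 := hfle ∅ hstable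
    have h2 := hfge ∅ hstable
    linarith
  have hDple : c 0 + Tp S c ≤ M := by
    have h := hfle (Spos S c) (stable_subset_S hS (Finset.filter_subset _ _))
    rw [fval] at h
    exact h
  have hDp : c 0 + Tp S c = M := by
    by_contra hne'
    obtain ⟨B, hBC, hstep⟩ := step3 hdisj hcover hC hS hvle (lt_of_le_of_ne hDple hne')
    refine hprim 1 (Or.inl rfl) B hBC ?_
    intro x hx
    rw [hF2] at hx
    exact hstep x hx.1 hx.2
  have hvleneg : ∀ v ∈ Vfin G, lin (-c) v ≤ M := fun v hv => by
    rw [lin_neg_coef]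
    have := hvle (-v) (neg_mem_Vfin G hv)
    rw [lin_neg_arg] at this
    linarith
  have hDmle : (-c) 0 + Tp S (-c) ≤ M := by
    have h := hfge (Sneg S c) (stable_subset_S hS (Finset.filter_subset _ _))
    rw [Tp_neg]
    rw [fval] at h
    have h0 : (-c) 0 = -(c 0) := rfl
    rw [h0]
    linarith
  have hDm : (-c) 0 + Tp S (-c) = M := by
    by_contra hne'
    obtain ⟨B, hBC, hstep⟩ := step3 hdisj hcover hC hS hvleneg (lt_of_le_of_ne hDmle hne')
    refine hprim (-1) (Or.inr rfl) B hBC ?_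
    intro x hx
    rw [hF2] at hx
    have hnx : -x ∈ hansenPolytope G := hansen_symm hx.1
    have hnxval : lin (-c) (-x) = M := by
      rw [lin_neg_coef, lin_neg_arg, neg_neg]; exact hx.2
    obtain ⟨_, hval⟩ := hstep (-x) hnx hnxval
    refine ⟨hx.1, ?_⟩
    have hsum : ∑ i ∈ B, (-x) i.succ = -∑ i ∈ B, x i.succ := by
      rw [← Finset.sum_neg_distrib]
      exact Finset.sum_congr rfl fun i _ => rfl
    rw [hsum] at hval
    have h0 : (-x) 0 = -(x 0) := rfl
    rw [h0] at hval
    linarith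
  have H1c : ∀ cc ∈ C, c cc.succ ≤ pf G S c cc := H1_of_eq hdisj hcover hC hS hfle hDp
  have hfleneg : ∀ I, IsStable G I → fval (-c) I ≤ M := fun I hI => by
    rw [fval_neg]
    linarith [hfge I hI]
  have H1negc : ∀ cc ∈ C, (-c) cc.succ ≤ pf G S (-c) cc :=
    H1_of_eq hdisj hcover hC hS hfleneg hDm
  have H2c : ∀ cc ∈ C, mf G S c cc ≤ c cc.succ := by
    intro cc hcc
    have h := H1negc cc hcc
    rw [pf_neg] at h
    have h0 : (-c) cc.succ = -(c cc.succ) := rfl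
    rw [h0] at h
    linarith
  -- the derived partition
  set SPd := Spos S c with hSPd
  set SMd := Sneg S c with hSMd
  set Cpd := C.filter (fun cc => c cc.succ = pf G S c cc ∧ ¬(c cc.succ = mf G S c cc))
    with hCpd
  set Cmd := C.filter (fun cc => c cc.succ = mf G S c cc ∧ ¬(c cc.succ = pf G S c cc))
    with hCmd
  have hq' : QH G C S Cpd Cmd SPd SMd := by
    refine ⟨Finset.filter_subset _ _, Finset.filter_subset _ _, ?_,
      Finset.filter_subset _ _, Finset.filter_subset _ _, ?_, ?_⟩
    · rw [Finset.disjoint_left]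
      intro a ha ha'
      exact (Finset.mem_filter.mp ha').2.2 (Finset.mem_filter.mp ha).2.1
    · rw [Finset.disjoint_left]
      intro a ha ha'
      have h1 := (Finset.mem_filter.mp ha).2
      have h2 := (Finset.mem_filter.mp ha').2
      linarith
    · intro cc hcc
      by_contra hno
      push_neg at hno
      have hadj : ∀ s, G.Adj cc s → s ∉ SPd ∪ SMd := fun s hadj hs => hno s hs hadj
      have hpf : pf G S c cc = 0 := by
        rw [pf_zero_iff]
        rw [Finset.eq_empty_iff_forall_notMem]
        intro s hs
        rw [Finset.mem_filter] at hs
        exact hadj s hs.2 (Finset.mem_union_left _ hs.1)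
      have hmf : mf G S c cc = 0 := by
        rw [mf_zero_iff]
        rw [Finset.eq_empty_iff_forall_notMem]
        intro s hs
        rw [Finset.mem_filter] at hs
        exact hadj s hs.2 (Finset.mem_union_right _ hs.1)
      rw [Finset.mem_union] at hcc
      rcases hcc with hcc | hcc
      · have h := (Finset.mem_filter.mp hcc).2
        rw [hpf, hmf] at h
        exact h.2 h.1
      · have h := (Finset.mem_filter.mp hcc).2
        rw [hpf, hmf] at h
        exact h.2 h.1
  set qc := cvec G C Cpd Cmd SPd SMd with hqc
  -- equivalence of goodness predicates
  have e3 : ∀ cc ∈ C, (qc cc.succ = pf G S qc cc ↔ c cc.succ = pf G S c cc) := by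
    intro cc hcc
    rw [hqc, qpf hdisj hq']
    by_cases hp : cc ∈ Cpd
    · rw [cvec_succ_Cp hdisj hq' hp]
      exact iff_of_true rfl (Finset.mem_filter.mp hp).2.1
    · by_cases hm : cc ∈ Cmd
      · rw [cvec_succ_Cm hdisj hq' hm]
        have hmain := (Finset.mem_filter.mp hm).2
        constructor
        · intro h
          exfalso
          have h1 := Nat.cast_nonneg (α := ℝ) ((SPd.filter (fun s => G.Adj cc s)).card)
          have h2 := Nat.cast_nonneg (α := ℝ) ((SMd.filter (fun s => G.Adj cc s)).card)
          have hp0 : ((SPd.filter (fun s => G.Adj cc s)).card : ℝ) = 0 := by linarith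
          have hm0 : ((SMd.filter (fun s => G.Adj cc s)).card : ℝ) = 0 := by linarith
          rw [cast_card_zero_iff] at hp0 hm0
          have hpf : pf G S c cc = 0 := pf_zero_iff.mpr hp0
          have hmf : mf G S c cc = 0 := mf_zero_iff.mpr hm0
          exact hmain.2 (by rw [hpf, hmain.1, hmf])
        · intro h
          exact absurd h hmain.2
      · rw [cvec_succ_C0 hdisj hq' hcc hp hm]
        have h1 := Nat.cast_nonneg (α := ℝ) ((SPd.filter (fun s => G.Adj cc s)).card)
        have h2 := Nat.cast_nonneg (α := ℝ) ((SMd.filter (fun s => G.Adj cc s)).card)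
        constructor
        · intro h
          have hp0 : ((SPd.filter (fun s => G.Adj cc s)).card : ℝ) = 0 := by linarith
          have hm0 : ((SMd.filter (fun s => G.Adj cc s)).card : ℝ) = 0 := by linarith
          rw [cast_card_zero_iff] at hp0 hm0
          have hpf : pf G S c cc = 0 := pf_zero_iff.mpr hp0
          have hmf : mf G S c cc = 0 := mf_zero_iff.mpr hm0
          have hle1 := H1c cc hcc
          have hle2 := H2c cc hcc
          rw [hpf] at hle1 ⊢
          rw [hmf] at hle2
          linarith
        · intro h
          have hmem : ¬(c cc.succ = pf G S c cc ∧ ¬(c cc.succ = mf G S c cc)) := by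
            intro hcon
            exact hp (Finset.mem_filter.mpr ⟨hcc, hcon⟩)
          have hcm : c cc.succ = mf G S c cc := by
            by_contra hcm
            exact hmem ⟨h, hcm⟩
          have hpfmf : pf G S c cc = mf G S c cc := by rw [← h, ← hcm]
          have hpge := pf_nonneg G S c cc
          have hmle := mf_nonpos G S c cc
          have hpf0 : pf G S c cc = 0 := by linarith
          have hmf0 : mf G S c cc = 0 := by linarith
          rw [pf_zero_iff] at hpf0
          rw [mf_zero_iff] at hmf0
          rw [← hSPd] at hpf0
          rw [← hSMd] at hmf0
          rw [hpf0, hmf0]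
          simp
  have e3' : ∀ cc ∈ C, (qc cc.succ = mf G S qc cc ↔ c cc.succ = mf G S c cc) := by
    intro cc hcc
    rw [hqc, qmf hdisj hq']
    by_cases hm : cc ∈ Cmd
    · rw [cvec_succ_Cm hdisj hq' hm]
      exact iff_of_true rfl (Finset.mem_filter.mp hm).2.1
    · by_cases hp : cc ∈ Cpd
      · rw [cvec_succ_Cp hdisj hq' hp]
        have hmain := (Finset.mem_filter.mp hp).2
        constructor
        · intro h
          exfalso
          have h1 := Nat.cast_nonneg (α := ℝ) ((SPd.filter (fun s => G.Adj cc s)).card)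
          have h2 := Nat.cast_nonneg (α := ℝ) ((SMd.filter (fun s => G.Adj cc s)).card)
          have hp0 : ((SPd.filter (fun s => G.Adj cc s)).card : ℝ) = 0 := by linarith
          have hm0 : ((SMd.filter (fun s => G.Adj cc s)).card : ℝ) = 0 := by linarith
          rw [cast_card_zero_iff] at hp0 hm0
          have hpf : pf G S c cc = 0 := pf_zero_iff.mpr hp0
          have hmf : mf G S c cc = 0 := mf_zero_iff.mpr hm0
          exact hmain.2 (by rw [hmf, hmain.1, hpf])
        · intro h
          exact absurd h hmain.2
      · rw [cvec_succ_C0 hdisj hq' hcc hp hm]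
        have h1 := Nat.cast_nonneg (α := ℝ) ((SPd.filter (fun s => G.Adj cc s)).card)
        have h2 := Nat.cast_nonneg (α := ℝ) ((SMd.filter (fun s => G.Adj cc s)).card)
        constructor
        · intro h
          have hp0 : ((SPd.filter (fun s => G.Adj cc s)).card : ℝ) = 0 := by linarith
          have hm0 : ((SMd.filter (fun s => G.Adj cc s)).card : ℝ) = 0 := by linarith
          rw [cast_card_zero_iff] at hp0 hm0
          have hpf : pf G S c cc = 0 := pf_zero_iff.mpr hp0
          have hmf : mf G S c cc = 0 := mf_zero_iff.mpr hm0
          have hle1 := H1c cc hcc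
          have hle2 := H2c cc hcc
          rw [hmf] at hle2 ⊢
          rw [hpf] at hle1
          linarith
        · intro h
          have hmem : ¬(c cc.succ = mf G S c cc ∧ ¬(c cc.succ = pf G S c cc)) := by
            intro hcon
            exact hm (Finset.mem_filter.mpr ⟨hcc, hcon⟩)
          have hcp : c cc.succ = pf G S c cc := by
            by_contra hcp
            exact hmem ⟨h, hcp⟩
          have hpfmf : pf G S c cc = mf G S c cc := by rw [← h, ← hcp]
          have hpge := pf_nonneg G S c cc
          have hmle := mf_nonpos G S c cc
          have hpf0 : pf G S c cc = 0 := by linarith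
          have hmf0 : mf G S c cc = 0 := by linarith
          rw [pf_zero_iff] at hpf0
          rw [mf_zero_iff] at hmf0
          rw [← hSPd] at hpf0
          rw [← hSMd] at hmf0
          rw [hpf0, hmf0]
          simp
  have hsn : Sneg S qc = Sneg S c := by rw [hqc, qSneg hdisj hq']
  have hsp : Spos S qc = Spos S c := by rw [hqc, qSpos hdisj hq']
  have hPred_iff : ∀ I : Finset (Fin n), (Pred G C S qc I ↔ Pred G C S c I) := by
    intro I
    unfold Pred
    constructor
    · rintro ⟨h1, h2, h3⟩
      exact ⟨fun s hs hmem => h1 s hs (by rw [hsn]; exact hmem),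
             fun x hx hxC => (e3 x hxC).mp (h2 x hx hxC),
             fun s hs hna => h3 s (by rw [hsp]; exact hs) hna⟩
    · rintro ⟨h1, h2, h3⟩
      exact ⟨fun s hs hmem => h1 s hs (by rw [← hsn]; exact hmem),
             fun x hx hxC => (e3 x hxC).mpr (h2 x hx hxC),
             fun s hs hna => h3 s (by rw [← hsp]; exact hs) hna⟩
  have e3n : ∀ cc ∈ C,
      ((-qc) cc.succ = pf G S (-qc) cc ↔ (-c) cc.succ = pf G S (-c) cc) := by
    intro cc hcc
    rw [pf_neg, pf_neg]
    have hq0 : (-qc) cc.succ = -(qc cc.succ) := rfl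
    have hc0 : (-c) cc.succ = -(c cc.succ) := rfl
    rw [hq0, hc0, neg_inj, neg_inj]
    exact e3' cc hcc
  have hsnn : Sneg S (-qc) = Spos S c := by rw [Sneg_neg, hsp]
  have hspn : Spos S (-qc) = Sneg S c := by rw [Spos_neg, hsn]
  have hsnc : Sneg S (-c) = Spos S c := Sneg_neg S c
  have hspc : Spos S (-c) = Sneg S c := Spos_neg S c
  have hPredN_iff : ∀ I : Finset (Fin n), (Pred G C S (-qc) I ↔ Pred G C S (-c) I) := by
    intro I
    unfold Pred
    constructor
    · rintro ⟨h1, h2, h3⟩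
      exact ⟨fun s hs hmem => h1 s hs (by rw [hsnn, ← hsnc]; exact hmem),
             fun x hx hxC => (e3n x hxC).mp (h2 x hx hxC),
             fun s hs hna => h3 s (by rw [hspn, ← hspc]; exact hs) hna⟩
    · rintro ⟨h1, h2, h3⟩
      exact ⟨fun s hs hmem => h1 s hs (by rw [hsnc, ← hsnn]; exact hmem),
             fun x hx hxC => (e3n x hxC).mpr (h2 x hx hxC),
             fun s hs hna => h3 s (by rw [hspc, ← hspn]; exact hs) hna⟩
  have hviff : ∀ v ∈ Vfin G, ((lin c) v = M ↔ (lin qc) v = Mq SPd SMd) := by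
    intro v hv
    rw [mem_Vfin] at hv
    obtain ⟨I, hI, (rfl | rfl)⟩ := hv
    · rw [lin_vert, lin_vert, ← hDp, fval_eq_iff hdisj hcover hC H1c hI, hqc,
        q_fval_eqP hdisj hcover hC hq' hI]
      exact (hPred_iff I).symm
    · rw [lin_neg_vert, lin_neg_vert]
      have hchain : fval c I = -M ↔ fval qc I = -(Mq SPd SMd) := by
        have h1 : fval c I = -M ↔ fval (-c) I = (-c) 0 + Tp S (-c) := by
          rw [fval_neg, hDm]
          constructor <;> intro h <;> linarith
        rw [h1, fval_eq_iff hdisj hcover hC H1negc hI, hqc,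
          q_fval_eqM hdisj hcover hC hq' hI]
        exact (hPredN_iff I).symm
      constructor
      · intro h
        have h2 : fval c I = -M := by linarith
        have h3 := hchain.mp h2
        linarith
      · intro h
        have h2 : fval qc I = -(Mq SPd SMd) := by linarith
        have h3 := hchain.mpr h2
        linarith
  have hqvle : ∀ v ∈ Vfin G, lin qc v ≤ Mq SPd SMd := q_vert_le hdisj hcover hC hq'
  have hqvge : ∀ v ∈ Vfin G, -(Mq SPd SMd) ≤ lin qc v := q_vert_ge hdisj hcover hC hq'
  have hvge : ∀ v ∈ Vfin G, -M ≤ lin c v := by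
    intro v hv
    rw [mem_Vfin] at hv
    obtain ⟨I, hI, (rfl | rfl)⟩ := hv
    · rw [lin_vert]; exact hfge I hI
    · rw [lin_neg_vert]
      have := hfle I hI
      linarith
  have hdir1 := transfer G c qc M (Mq SPd SMd) Mq_nonneg hvle hqvle hqvge
    (fun v hv h => (hviff v hv).mp h)
  have hdir2 := transfer G qc c (Mq SPd SMd) M hM0 hqvle hvle hvge
    (fun v hv h => (hviff v hv).mpr h)
  refine ⟨Cpd, Cmd, SPd, SMd, hq', ?_⟩
  rw [hF2, q_face_eq hdisj hcover hC hS hq']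
  ext x
  constructor
  · rintro ⟨hxP, hxv⟩
    exact ⟨hxP, hdir1 x hxP hxv⟩
  · rintro ⟨hxP, hxv⟩
    exact ⟨hxP, hdir2 x hxP hxv⟩

end
end HansenAux

namespace HansenAux
open Finset
open scoped Classical
noncomputable section
variable {n : ℕ} {G : SimpleGraph (Fin n)} {C S : Finset (Fin n)}

lemma q_inj (hdisj : Disjoint C S) (hcover : C ∪ S = Finset.univ)
    (hC : G.IsClique (↑C : Set (Fin n))) (hS : IsStable G S)
    {Cp Cm SP SM Cp' Cm' SP' SM' : Finset (Fin n)}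
    (hq : QH G C S Cp Cm SP SM) (hq' : QH G C S Cp' Cm' SP' SM')
    (hfeq : qface G C Cp Cm SP SM = qface G C Cp' Cm' SP' SM') :
    Cp = Cp' ∧ Cm = Cm' ∧ SP = SP' ∧ SM = SM' := by
  refine ⟨?_, ?_, ?_, ?_⟩ <;> (apply Finset.ext; intro x)
  · rw [R_Cp hdisj hcover hC hS hq x, hfeq]
    exact (R_Cp hdisj hcover hC hS hq' x).symm
  · rw [R_Cm hdisj hcover hC hS hq x, hfeq]
    exact (R_Cm hdisj hcover hC hS hq' x).symm
  · rw [R_SP hdisj hcover hC hS hq x, hfeq]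
    exact (R_SP hdisj hcover hC hS hq' x).symm
  · rw [R_SM hdisj hcover hC hS hq x, hfeq]
    exact (R_SM hdisj hcover hC hS hq' x).symm

end
end HansenAux

/-- For a split graph `G = C ∪ S` on `d − 1` vertices, the number of primitive faces of
`H(G)` (nonempty exposed faces contained in no type-(1)-facet `[ε, B]`, `ε = ±1`,
`B ⊆ C`) equals the number of partitions `(C⁺, C⁻, C⁰, S⁺, S⁻, S⁰)` of `(C, S)` —
encoded as quadruples `(C⁺, C⁻, S⁺, S⁻)` of disjoint subsets, including the trivial
partition — satisfying condition (A): every element of `C⁺ ∪ C⁻` has a neighbor in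
`S⁺ ∪ S⁻`. -/
theorem hansen_split_primitive_face_count {n : ℕ} (G : SimpleGraph (Fin n))
    (C S : Finset (Fin n)) (hdisj : Disjoint C S) (hcover : C ∪ S = Finset.univ)
    (hC : G.IsClique (↑C : Set (Fin n))) (hS : IsStable G S) :
    {F : Set (Fin (n + 1) → ℝ) | IsExposed ℝ (hansenPolytope G) F ∧ F.Nonempty ∧
        (∀ ε : ℝ, (ε = 1 ∨ ε = -1) → ∀ B ⊆ C, ¬ F ⊆ hFace G ε B)}.ncard =
      Set.ncard {q : Finset (Fin n) × Finset (Fin n) × Finset (Fin n) × Finset (Fin n) |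
        q.1 ⊆ C ∧ q.2.1 ⊆ C ∧ Disjoint q.1 q.2.1 ∧
        q.2.2.1 ⊆ S ∧ q.2.2.2 ⊆ S ∧ Disjoint q.2.2.1 q.2.2.2 ∧
        (∀ c ∈ q.1 ∪ q.2.1, ∃ s ∈ q.2.2.1 ∪ q.2.2.2, G.Adj c s)} := by
  classical
  have key : {F : Set (Fin (n + 1) → ℝ) | IsExposed ℝ (hansenPolytope G) F ∧ F.Nonempty ∧
        (∀ ε : ℝ, (ε = 1 ∨ ε = -1) → ∀ B ⊆ C, ¬ F ⊆ hFace G ε B)} =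
      (fun q : Finset (Fin n) × Finset (Fin n) × Finset (Fin n) × Finset (Fin n) =>
        HansenAux.qface G C q.1 q.2.1 q.2.2.1 q.2.2.2) ''
      {q : Finset (Fin n) × Finset (Fin n) × Finset (Fin n) × Finset (Fin n) |
        q.1 ⊆ C ∧ q.2.1 ⊆ C ∧ Disjoint q.1 q.2.1 ∧
        q.2.2.1 ⊆ S ∧ q.2.2.2 ⊆ S ∧ Disjoint q.2.2.1 q.2.2.2 ∧
        (∀ c ∈ q.1 ∪ q.2.1, ∃ s ∈ q.2.2.1 ∪ q.2.2.2, G.Adj c s)} := by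
    ext F
    simp only [Set.mem_setOf_eq, Set.mem_image]
    constructor
    · rintro ⟨hexp, hne, hprim⟩
      obtain ⟨Cp, Cm, SP, SM, hq, heq⟩ :=
        HansenAux.surj hdisj hcover hC hS hexp hne hprim
      exact ⟨(Cp, Cm, SP, SM), hq, heq.symm⟩
    · rintro ⟨q, hqset, rfl⟩
      have hq : HansenAux.QH G C S q.1 q.2.1 q.2.2.1 q.2.2.2 := hqset
      exact ⟨HansenAux.q_face_exposed,
        HansenAux.q_face_nonempty hdisj hcover hC hS hq,
        fun ε _ B hB => HansenAux.q_face_primitive hdisj hcover hC hS hq ε B hB⟩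
  rw [key]
  apply Set.ncard_image_of_injOn
  rintro ⟨a, b, c, d⟩ hq ⟨a', b', c', d'⟩ hq' heq
  obtain ⟨h1, h2, h3, h4⟩ :=
    HansenAux.q_inj hdisj hcover hC hS (show HansenAux.QH G C S a b c d from hq)
      (show HansenAux.QH G C S a' b' c' d' from hq') heq
  subst h1; subst h2; subst h3; subst h4
  rfl
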